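/- arXiv:2108.04464 — 2 statements merged into one kernel-verified Lean document; each statement's English description precedes it below -/
import Mathlib

section
/- Let (Ω, 𝔽, ℙ) be an atomless probability space, X a nonnegative random variable with essential supremum M < ∞ and survival function S_X = 1 − F_X, F₀ a continuous cdf on ℝ, g a distortion function, ϱ ≥ 0, and w₀, ξ real numbers. Define z₀ = sup{ z ∈ ℝ : (1+ϱ) g(S_X(z)) ≥ 1 } and K(z,y) = F_X(y) + F₀( w₀ − (1+ϱ)∫_z^y g(S_X(t)) dt − ξ − z ) for 0 ≤ z ≤ y ≤ M. Suppose y* ∈ [0, M] maximizes y ↦ K(min{y, z₀}, y) over [0, M], and set z* = min{y*, z₀} and I* = I_{z*,y*}. Then I* is an optimal solution of the distributionally robust problem sup_{I∈𝓘} inf_{Y ~ F₀} ℙ( w₀ − Y − X + I(X) − π^g(I(X)) ≥ ξ ): for every I ∈ 𝓘, the infimum of ℙ( w₀ − Y − X + I(X) − π^g(I(X)) ≥ ξ ) over all random variables Y on (Ω, 𝔽, ℙ) with cdf F₀ is at most the corresponding infimum for I*. -/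
open MeasureTheory Filter Topology

/-- A measure is atomless if every set of positive measure contains a measurable subset of
strictly smaller, yet positive, measure. -/
def Atomless {Ω : Type*} [MeasurableSpace Ω] (P : Measure Ω) : Prop :=
  ∀ s : Set Ω, MeasurableSet s → 0 < P s →
    ∃ t : Set Ω, t ⊆ s ∧ MeasurableSet t ∧ 0 < P t ∧ P t < P s

/-- A distortion function: increasing `g : [0,1] → [0,1]` with `g 0 = 0` and `g 1 = 1`. -/
def IsDistortion (g : ℝ → ℝ) : Prop :=
  MonotoneOn g (Set.Icc 0 1) ∧ (∀ x ∈ Set.Icc (0:ℝ) 1, g x ∈ Set.Icc (0:ℝ) 1) ∧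
    g 0 = 0 ∧ g 1 = 1

/-- The cdf of a real random variable `Z` under `P`. -/
noncomputable def cdfOf {Ω : Type*} [MeasurableSpace Ω] (P : Measure Ω) (Z : Ω → ℝ) :
    ℝ → ℝ := fun z => (P {ω | Z ω ≤ z}).toReal

/-- Distorted expectation `E^g[Z] = ∫_0^∞ g(1 − F_Z(z)) dz` of a nonnegative random
variable `Z`. -/
noncomputable def distExp {Ω : Type*} [MeasurableSpace Ω] (g : ℝ → ℝ) (P : Measure Ω)
    (Z : Ω → ℝ) : ℝ := ∫ z in Set.Ioi (0 : ℝ), g (1 - cdfOf P Z z)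

/-- The ceded loss function `I_{z,y}`: `0` on `[0,z]`, `x − z` on `(z,y]`, `y − z` beyond. -/
noncomputable def Ifun (z y : ℝ) : ℝ → ℝ := fun x =>
  if x ≤ z then 0 else if x ≤ y then x - z else y - z

/-- A ceded loss function: `I(0) = 0`, with both `I` and `x ↦ x − I(x)` increasing on
`[0,∞)`. -/
def IsCeded (I : ℝ → ℝ) : Prop :=
  I 0 = 0 ∧ MonotoneOn I (Set.Ici 0) ∧ MonotoneOn (fun x => x - I x) (Set.Ici 0)

/-- The function `K(z,y) = F_X(y) + F₀(w₀ − (1+ϱ)∫_z^y g(S_X(t)) dt − ξ − z)`. -/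
noncomputable def Kfun {Ω : Type*} [MeasurableSpace Ω] (P : Measure Ω) (X : Ω → ℝ)
    (g F₀ : ℝ → ℝ) (ϱ w₀ ξ : ℝ) (z y : ℝ) : ℝ :=
  cdfOf P X y + F₀ (w₀ - (1 + ϱ) * (∫ t in z..y, g (1 - cdfOf P X t)) - ξ - z)

/-- The worst-case (over all background risks `Y` with cdf `F₀`) probability of the insurer
reaching the goal `ξ` under the ceded loss function `I`. -/
noncomputable def robustVal {Ω : Type*} [MeasurableSpace Ω] (P : Measure Ω) (X : Ω → ℝ)
    (g F₀ : ℝ → ℝ) (ϱ w₀ ξ : ℝ) (I : ℝ → ℝ) : ℝ :=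
  sInf {p : ℝ | ∃ Y : Ω → ℝ, Measurable Y ∧ (∀ z : ℝ, cdfOf P Y z = F₀ z) ∧
    p = (P {ω | ξ ≤ w₀ - Y ω - X ω + I (X ω)
        - (1 + ϱ) * distExp g P (fun ω' => I (X ω'))}).toReal}


open scoped ENNReal




lemma aux_prob_compl_le {Ω : Type*} [MeasurableSpace Ω] (P : Measure Ω) [IsProbabilityMeasure P]
    (W : Ω → ℝ) (hW : Measurable W) (t : ℝ) :
    (P {ω | t < W ω}).toReal = 1 - cdfOf P W t := by
  have hm : MeasurableSet {ω | W ω ≤ t} := hW measurableSet_Iic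
  have h : {ω | t < W ω} = {ω | W ω ≤ t}ᶜ := by ext ω; simp [not_le]
  rw [h, measure_compl hm (measure_ne_top _ _), measure_univ,
    ENNReal.toReal_sub_of_le (prob_le_one) (by simp)]
  simp [cdfOf]

lemma aux_cdf_mono {Ω : Type*} [MeasurableSpace Ω] (P : Measure Ω) [IsProbabilityMeasure P]
    (W : Ω → ℝ) : Monotone (cdfOf P W) := fun a b hab =>
  ENNReal.toReal_mono (measure_ne_top _ _)
    (measure_mono (fun ω (h : W ω ≤ a) => le_trans h hab))

lemma aux_cdf_nonneg {Ω : Type*} [MeasurableSpace Ω] (P : Measure Ω)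
    (W : Ω → ℝ) (t : ℝ) : 0 ≤ cdfOf P W t := ENNReal.toReal_nonneg

lemma aux_cdf_le_one {Ω : Type*} [MeasurableSpace Ω] (P : Measure Ω) [IsProbabilityMeasure P]
    (W : Ω → ℝ) (t : ℝ) : cdfOf P W t ≤ 1 := by
  have h := ENNReal.toReal_mono (b := (1:ℝ≥0∞)) (by simp)
    (prob_le_one (μ := P) (s := {ω | W ω ≤ t}))
  simpa [cdfOf] using h

lemma aux_ceded_nonneg {I : ℝ → ℝ} (hI : IsCeded I) {x : ℝ} (hx : 0 ≤ x) : 0 ≤ I x := by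
  have h := hI.2.1 (Set.self_mem_Ici) hx hx
  rwa [hI.1] at h

lemma aux_ceded_le_self {I : ℝ → ℝ} (hI : IsCeded I) {x : ℝ} (hx : 0 ≤ x) : I x ≤ x := by
  have h := hI.2.2 (Set.self_mem_Ici) hx hx
  simp only [hI.1, sub_zero] at h
  linarith

lemma aux_ceded_ext_mono {I : ℝ → ℝ} (hI : IsCeded I) : Monotone (fun x => I (max x 0)) := by
  intro a b hab
  exact hI.2.1 (le_max_right a 0) (le_max_right b 0) (max_le_max hab le_rfl)

lemma aux_ceded_retained_mono {I : ℝ → ℝ} (hI : IsCeded I) :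
    Monotone (fun x => max x 0 - I (max x 0)) := by
  intro a b hab
  exact hI.2.2 (le_max_right a 0) (le_max_right b 0) (max_le_max hab le_rfl)

noncomputable def auxQ (F₀ : ℝ → ℝ) (u : ℝ) : ℝ := sInf {x | u ≤ F₀ x}

lemma aux_F0_nonneg {F₀ : ℝ → ℝ} (hmono : Monotone F₀) (hbot : Tendsto F₀ atBot (𝓝 0))
    (x : ℝ) : 0 ≤ F₀ x :=
  le_of_tendsto hbot (eventually_atBot.2 ⟨x, fun y hy => hmono hy⟩)

lemma aux_F0_le_one {F₀ : ℝ → ℝ} (hmono : Monotone F₀) (htop : Tendsto F₀ atTop (𝓝 1))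
    (x : ℝ) : F₀ x ≤ 1 :=
  ge_of_tendsto htop (eventually_atTop.2 ⟨x, fun y hy => hmono hy⟩)

lemma aux_Q_gc {F₀ : ℝ → ℝ} (hmono : Monotone F₀) (hcont : Continuous F₀)
    (hbot : Tendsto F₀ atBot (𝓝 0)) (htop : Tendsto F₀ atTop (𝓝 1))
    {u : ℝ} (hu0 : 0 < u) (hu1 : u < 1) (x : ℝ) :
    auxQ F₀ u ≤ x ↔ u ≤ F₀ x := by
  have hne : {x | u ≤ F₀ x}.Nonempty := (htop.eventually_const_lt hu1).exists.imp
    (fun y hy => hy.le)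
  have hbdd : BddBelow {x | u ≤ F₀ x} := by
    obtain ⟨x₀, hx₀⟩ := eventually_atBot.1 (hbot.eventually_lt_const hu0)
    refine ⟨x₀, fun y hy => le_of_not_gt fun hlt => ?_⟩
    exact absurd (hy : u ≤ F₀ y) (not_le.2 (hx₀ y hlt.le))
  have hcl : IsClosed {x | u ≤ F₀ x} := isClosed_Ici.preimage hcont
  have hmem : auxQ F₀ u ∈ {x | u ≤ F₀ x} := hcl.csInf_mem hne hbdd
  constructor
  · intro h; exact le_trans hmem (hmono h)
  · intro h; exact csInf_le hbdd h
-- L1: uniform law of F₀ ∘ Y₀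
lemma aux_unif_law {Ω : Type*} [MeasurableSpace Ω] (P : Measure Ω) [IsProbabilityMeasure P]
    {F₀ : ℝ → ℝ} (hmono : Monotone F₀) (hcont : Continuous F₀)
    (hbot : Tendsto F₀ atBot (𝓝 0)) (htop : Tendsto F₀ atTop (𝓝 1))
    {Y₀ : Ω → ℝ} (hY₀ : ∀ z, cdfOf P Y₀ z = F₀ z)
    {u : ℝ} (hu0 : 0 ≤ u) (hu1 : u < 1) :
    (P {ω | F₀ (Y₀ ω) ≤ u}).toReal = u := by
  by_cases hD : {x | F₀ x ≤ u}.Nonempty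
  · have hbdd : BddAbove {x | F₀ x ≤ u} := by
      obtain ⟨x₁, hx₁⟩ := eventually_atTop.1 (htop.eventually_const_lt hu1)
      refine ⟨x₁, fun y hy => le_of_not_gt fun hlt => ?_⟩
      exact absurd (hy : F₀ y ≤ u) (not_le.2 (hx₁ y hlt.le))
    have hcl : IsClosed {x | F₀ x ≤ u} := isClosed_Iic.preimage hcont
    set σ := sSup {x | F₀ x ≤ u} with hσ
    have hmem : σ ∈ {x | F₀ x ≤ u} := hcl.csSup_mem hD hbdd
    have hDeq : {x | F₀ x ≤ u} = Set.Iic σ := by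
      apply Set.Subset.antisymm
      · exact fun x hx => le_csSup hbdd hx
      · exact fun x hx => le_trans (hmono hx) hmem
    have hset : {ω | F₀ (Y₀ ω) ≤ u} = {ω | Y₀ ω ≤ σ} := by
      ext ω
      constructor
      · intro h
        have hx : Y₀ ω ∈ {x | F₀ x ≤ u} := h
        rw [hDeq] at hx; exact hx
      · intro h; exact le_trans (hmono h) hmem
    have hσu : F₀ σ = u := by
      refine le_antisymm hmem ?_
      have hseq : Tendsto (fun n : ℕ => σ + 1 / (n + 1)) atTop (𝓝 σ) := by
        simpa using (tendsto_const_nhds (x := σ)).add tendsto_one_div_add_atTop_nhds_zero_nat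
      have hlim : Tendsto (fun n : ℕ => F₀ (σ + 1 / (n + 1))) atTop (𝓝 (F₀ σ)) :=
        (hcont.continuousAt.tendsto).comp hseq
      refine ge_of_tendsto hlim (Eventually.of_forall fun n => ?_)
      by_contra hlt
      push_neg at hlt
      have : σ + 1 / (n + 1) ∈ {x | F₀ x ≤ u} := hlt.le
      have h1 : σ + 1 / (n + 1) ≤ σ := le_csSup hbdd this
      have h2 : (0:ℝ) < 1 / (n + 1) := by positivity
      linarith
    rw [hset]
    have := hY₀ σ
    rw [cdfOf] at this
    rw [this, hσu]
  · have hempty : {ω | F₀ (Y₀ ω) ≤ u} = ∅ := by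
      ext ω; simp only [Set.mem_setOf_eq, Set.mem_empty_iff_false, iff_false]
      intro h; exact hD ⟨Y₀ ω, h⟩
    have hu0' : u ≤ 0 := by
      refine ge_of_tendsto hbot (Eventually.of_forall fun x => ?_)
      by_contra h; push_neg at h
      exact hD ⟨x, h.le⟩
    rw [hempty]
    simp [le_antisymm hu0' hu0]

-- L2: no atoms for a [0,1]-valued variable with uniform cdf on [0,1)
lemma aux_unif_no_atom {Ω : Type*} [MeasurableSpace Ω] (P : Measure Ω) [IsProbabilityMeasure P]
    {V : Ω → ℝ} (hVm : Measurable V) (h0 : ∀ ω, 0 ≤ V ω) (h1 : ∀ ω, V ω ≤ 1)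
    (hlaw : ∀ v, 0 ≤ v → v < 1 → (P {ω | V ω ≤ v}).toReal = v) (u : ℝ) :
    P {ω | V ω = u} = 0 := by
  rcases lt_or_ge u 0 with hu | hu
  · have : {ω | V ω = u} = ∅ := by
      ext ω; simp only [Set.mem_setOf_eq, Set.mem_empty_iff_false, iff_false]
      intro h; exact absurd (h ▸ h0 ω) (not_le.2 hu)
    simp [this]
  rcases lt_or_ge (1:ℝ) u with hu1 | hu1
  · have : {ω | V ω = u} = ∅ := by
      ext ω; simp only [Set.mem_setOf_eq, Set.mem_empty_iff_false, iff_false]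
      intro h; exact absurd (h ▸ h1 ω) (not_le.2 hu1)
    simp [this]
  rcases eq_or_lt_of_le hu with hu0 | hu0
  · -- u = 0
    have hsub : {ω | V ω = u} ⊆ {ω | V ω ≤ 0} := by
      intro ω h; rw [Set.mem_setOf_eq] at h ⊢; rw [h, ← hu0]
    have h00 : P {ω | V ω ≤ (0:ℝ)} = 0 := by
      have := hlaw 0 le_rfl one_pos
      exact (ENNReal.toReal_eq_zero_iff _).1 this |>.resolve_right (measure_ne_top _ _)
    exact measure_mono_null hsub h00
  · -- 0 < u ≤ 1
    have key : ∀ v, 0 ≤ v → v < u → (P {ω | V ω = u}).toReal ≤ u - v := by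
      intro v hv0 hvu
      have hdisj : Disjoint {ω | V ω = u} {ω | V ω ≤ v} := by
        rw [Set.disjoint_left]
        intro ω h1' h2'
        rw [Set.mem_setOf_eq] at h1' h2'
        rw [h1'] at h2'; linarith
      have hmu : MeasurableSet {ω | V ω ≤ v} := hVm measurableSet_Iic
      have hunion : P {ω | V ω = u} + P {ω | V ω ≤ v} = P ({ω | V ω = u} ∪ {ω | V ω ≤ v}) :=
        (measure_union hdisj hmu).symm
      have hsub : {ω | V ω = u} ∪ {ω | V ω ≤ v} ⊆ {ω | V ω ≤ u} := by
        intro ω h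
        rcases h with h | h
        · rw [Set.mem_setOf_eq] at h ⊢; exact h.le
        · rw [Set.mem_setOf_eq] at h ⊢; linarith
      have hle : P {ω | V ω = u} + P {ω | V ω ≤ v} ≤ P {ω | V ω ≤ u} := by
        rw [hunion]; exact measure_mono hsub
      have hfin1 : P {ω | V ω = u} ≠ ⊤ := measure_ne_top _ _
      have hfin2 : P {ω | V ω ≤ v} ≠ ⊤ := measure_ne_top _ _
      have htr : (P {ω | V ω = u}).toReal + (P {ω | V ω ≤ v}).toReal
          ≤ (P {ω | V ω ≤ u}).toReal := by
        rw [← ENNReal.toReal_add hfin1 hfin2]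
        exact ENNReal.toReal_mono (measure_ne_top _ _) hle
      have hvval : (P {ω | V ω ≤ v}).toReal = v := hlaw v hv0 (lt_of_lt_of_le hvu hu1)
      have huval : (P {ω | V ω ≤ u}).toReal ≤ u := by
        rcases lt_or_ge u 1 with h | h
        · rw [hlaw u hu (by linarith)]
        · have h8 := ENNReal.toReal_mono (a := P {ω | V ω ≤ u}) (b := 1)
            (by simp) prob_le_one
          simp at h8; linarith
      linarith
    have : (P {ω | V ω = u}).toReal ≤ 0 := by
      by_contra hpos
      push_neg at hpos
      set p := (P {ω | V ω = u}).toReal with hp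
      have h1' := key (max 0 (u - p/2)) (le_max_left _ _) (by
        rcases max_cases 0 (u - p/2) with ⟨h,_⟩ | ⟨h,_⟩ <;> rw [h] <;> linarith)
      have : u - max 0 (u - p/2) ≤ p/2 := by
        rcases max_cases 0 (u - p/2) with ⟨h,h'⟩ | ⟨h,_⟩ <;> rw [h] <;> linarith
      linarith
    have h0' : 0 ≤ (P {ω | V ω = u}).toReal := ENNReal.toReal_nonneg
    have : (P {ω | V ω = u}).toReal = 0 := le_antisymm this h0'
    exact (ENNReal.toReal_eq_zero_iff _).1 this |>.resolve_right (measure_ne_top _ _)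
-- PIT on a tie set {Z = tb}
lemma aux_tie {Ω : Type*} [MeasurableSpace Ω] (P : Measure Ω) [IsProbabilityMeasure P]
    {Z U : Ω → ℝ} (hZ : Measurable Z) (hU : Measurable U)
    (hU1 : ∀ ω, U ω ≤ 1) (hU00 : P {ω | U ω ≤ 0} = 0)
    (hUatom : ∀ u, P {ω | U ω = u} = 0)
    (tb : ℝ) {s : ℝ} (hs0 : 0 ≤ s) (hsΔ : s < (P {ω | Z ω = tb}).toReal) :
    (P ({ω | Z ω = tb} ∩
      {ω | (P ({ω' | Z ω' = tb} ∩ {ω' | U ω' ≤ U ω})).toReal ≤ s})).toReal = s := by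
  set gt : ℝ → ℝ := fun u => (P ({ω | Z ω = tb} ∩ {ω | U ω ≤ u})).toReal with hgt
  have hgtmono : Monotone gt := by
    intro a b hab
    exact ENNReal.toReal_mono (measure_ne_top _ _)
      (measure_mono (Set.inter_subset_inter_right _ (fun ω (h : U ω ≤ a) => le_trans h hab)))
  have hmemS0 : gt 0 ≤ s := by
    have h1 : P ({ω | Z ω = tb} ∩ {ω | U ω ≤ (0:ℝ)}) = 0 :=
      measure_mono_null Set.inter_subset_right hU00
    simp only [hgt, h1, ENNReal.toReal_zero]; exact hs0
  have hS1 : ∀ u ∈ {u | gt u ≤ s}, u ≤ 1 := by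
    intro u hu
    by_contra hlt
    push_neg at hlt
    have h2 : {ω | Z ω = tb} ∩ {ω | U ω ≤ u} = {ω | Z ω = tb} := by
      apply Set.inter_eq_self_of_subset_left
      intro ω _; exact le_trans (hU1 ω) hlt.le
    have : gt u = (P {ω | Z ω = tb}).toReal := by rw [hgt]; simp only [h2]
    rw [Set.mem_setOf_eq, this] at hu
    linarith
  have hSne : ({u | gt u ≤ s}).Nonempty := ⟨0, hmemS0⟩
  have hSbdd : BddAbove {u | gt u ≤ s} := ⟨1, fun u hu => hS1 u hu⟩
  set u₀ := sSup {u | gt u ≤ s} with hu₀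
  have hu₀mem0 : (0:ℝ) ≤ u₀ := le_csSup hSbdd hmemS0
  -- measurability of basic sets
  have hmZ : MeasurableSet {ω | Z ω = tb} := hZ (measurableSet_singleton tb)
  have hmU : ∀ u : ℝ, MeasurableSet {ω | U ω ≤ u} := fun u => hU measurableSet_Iic
  -- KEY1 : gt u₀ ≤ s
  have key1 : gt u₀ ≤ s := by
    have hUnion : {ω | Z ω = tb} ∩ {ω | U ω < u₀}
        = ⋃ n : ℕ, ({ω | Z ω = tb} ∩ {ω | U ω ≤ u₀ - 1 / (n + 1)}) := by
      ext ω
      simp only [Set.mem_inter_iff, Set.mem_iUnion, Set.mem_setOf_eq]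
      constructor
      · rintro ⟨h1, h2⟩
        obtain ⟨n, hn⟩ := exists_nat_one_div_lt (sub_pos.2 h2)
        exact ⟨n, h1, by push_cast at hn ⊢; linarith⟩
      · rintro ⟨n, h1, h2⟩
        have : (0:ℝ) < 1 / (n + 1) := by positivity
        exact ⟨h1, by linarith⟩
    have hdir : Monotone (fun n : ℕ => ({ω | Z ω = tb} ∩ {ω | U ω ≤ u₀ - 1 / (n + 1)})) := by
      intro a b hab
      refine Set.inter_subset_inter_right _ (fun ω (h : U ω ≤ u₀ - 1/(a+1)) => ?_)
      have h1 : (1:ℝ) / (b + 1) ≤ 1 / (a + 1) := by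
        apply one_div_le_one_div_of_le (by positivity)
        exact_mod_cast add_le_add_left (Nat.cast_le.2 hab) 1
      simp only [Set.mem_setOf_eq]; linarith
    have hsup : P ({ω | Z ω = tb} ∩ {ω | U ω < u₀})
        = ⨆ n : ℕ, P ({ω | Z ω = tb} ∩ {ω | U ω ≤ u₀ - 1 / (n + 1)}) := by
      rw [hUnion]
      exact Directed.measure_iUnion hdir.directed_le
    have hboundn : ∀ n : ℕ, P ({ω | Z ω = tb} ∩ {ω | U ω ≤ u₀ - 1 / (n + 1)})
        ≤ ENNReal.ofReal s := by
      intro n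
      have hlt : u₀ - 1 / (n+1) < u₀ := by
        have : (0:ℝ) < 1 / (n + 1) := by positivity
        linarith
      obtain ⟨u', hu'S, hu'⟩ := exists_lt_of_lt_csSup hSne hlt
      have hm : P ({ω | Z ω = tb} ∩ {ω | U ω ≤ u₀ - 1 / (n + 1)})
          ≤ P ({ω | Z ω = tb} ∩ {ω | U ω ≤ u'}) :=
        measure_mono (Set.inter_subset_inter_right _
          (fun ω (h : U ω ≤ u₀ - 1/(n+1)) => le_trans h hu'.le))
      refine le_trans hm ?_
      rw [ENNReal.le_ofReal_iff_toReal_le (measure_ne_top _ _) hs0]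
      exact hu'S
    have hlt' : P ({ω | Z ω = tb} ∩ {ω | U ω < u₀}) ≤ ENNReal.ofReal s := by
      rw [hsup]; exact iSup_le hboundn
    have hsubset : {ω | Z ω = tb} ∩ {ω | U ω ≤ u₀}
        ⊆ ({ω | Z ω = tb} ∩ {ω | U ω < u₀}) ∪ {ω | U ω = u₀} := by
      rintro ω ⟨h1, h2⟩
      have h2' : U ω ≤ u₀ := h2
      rcases lt_or_eq_of_le h2' with h | h
      · exact Or.inl ⟨h1, h⟩
      · exact Or.inr h
    have : P ({ω | Z ω = tb} ∩ {ω | U ω ≤ u₀}) ≤ ENNReal.ofReal s := by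
      refine le_trans (measure_mono hsubset) (le_trans (measure_union_le _ _) ?_)
      rw [hUatom u₀, add_zero]
      exact hlt'
    exact ENNReal.toReal_le_of_le_ofReal hs0 this
  -- KEY2 : s ≤ gt u₀
  have key2 : s ≤ gt u₀ := by
    have hInter : {ω | Z ω = tb} ∩ {ω | U ω ≤ u₀}
        = ⋂ n : ℕ, ({ω | Z ω = tb} ∩ {ω | U ω ≤ u₀ + 1 / (n + 1)}) := by
      ext ω
      simp only [Set.mem_inter_iff, Set.mem_iInter, Set.mem_setOf_eq]
      constructor
      · rintro ⟨h1, h2⟩ n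
        have : (0:ℝ) < 1 / (n + 1) := by positivity
        exact ⟨h1, by linarith⟩
      · intro h
        refine ⟨(h 0).1, ?_⟩
        by_contra hlt
        push_neg at hlt
        obtain ⟨n, hn⟩ := exists_nat_one_div_lt (sub_pos.2 hlt)
        have := (h n).2
        push_cast at hn this ⊢
        linarith
    have hanti : Antitone (fun n : ℕ => ({ω | Z ω = tb} ∩ {ω | U ω ≤ u₀ + 1 / (n + 1)})) := by
      intro a b hab
      refine Set.inter_subset_inter_right _ (fun ω (h : U ω ≤ u₀ + 1/(b+1)) => ?_)
      have h1 : (1:ℝ) / (b + 1) ≤ 1 / (a + 1) := by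
        apply one_div_le_one_div_of_le (by positivity)
        exact_mod_cast add_le_add_left (Nat.cast_le.2 hab) 1
      simp only [Set.mem_setOf_eq]; linarith
    have hinf : P ({ω | Z ω = tb} ∩ {ω | U ω ≤ u₀})
        = ⨅ n : ℕ, P ({ω | Z ω = tb} ∩ {ω | U ω ≤ u₀ + 1 / (n + 1)}) := by
      rw [hInter]
      refine Directed.measure_iInter (fun n => (hmZ.inter (hmU _)).nullMeasurableSet)
        hanti.directed_ge ⟨0, measure_ne_top _ _⟩
    have hboundn : ∀ n : ℕ, ENNReal.ofReal s
        ≤ P ({ω | Z ω = tb} ∩ {ω | U ω ≤ u₀ + 1 / (n + 1)}) := by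
      intro n
      have hnotmem : ¬ (u₀ + 1 / (n+1) ∈ {u | gt u ≤ s}) := by
        intro hmem
        have := le_csSup hSbdd hmem
        have hpos : (0:ℝ) < 1 / (n + 1) := by positivity
        linarith
      rw [Set.mem_setOf_eq, not_le] at hnotmem
      rw [ENNReal.ofReal_le_iff_le_toReal (measure_ne_top _ _)]
      exact hnotmem.le
    have : ENNReal.ofReal s ≤ P ({ω | Z ω = tb} ∩ {ω | U ω ≤ u₀}) := by
      rw [hinf]; exact le_iInf hboundn
    exact (ENNReal.ofReal_le_iff_le_toReal (measure_ne_top _ _)).1 this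
  -- the event {gt (U ω) ≤ s} equals {U ≤ u₀}
  have hevent : {ω | (P ({ω' | Z ω' = tb} ∩ {ω' | U ω' ≤ U ω})).toReal ≤ s}
      = {ω | U ω ≤ u₀} := by
    ext ω
    simp only [Set.mem_setOf_eq]
    constructor
    · intro h
      exact le_csSup hSbdd (h : gt (U ω) ≤ s)
    · intro h
      exact le_trans (hgtmono h) key1
  rw [hevent]
  exact le_antisymm key1 key2
lemma aux_le_split {Ω : Type*} [MeasurableSpace Ω] (P : Measure Ω)
    {Z : Ω → ℝ} (hZ : Measurable Z) (t : ℝ) :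
    P {ω | Z ω ≤ t} = P {ω | Z ω < t} + P {ω | Z ω = t} := by
  have hset : {ω | Z ω ≤ t} = {ω | Z ω < t} ∪ {ω | Z ω = t} := by
    ext ω
    simp only [Set.mem_union, Set.mem_setOf_eq]
    constructor
    · intro h; exact lt_or_eq_of_le h
    · rintro (h | h); exacts [h.le, h.le]
  rw [hset]
  exact measure_union (Set.disjoint_left.2
    (fun ω (h1 : Z ω < t) (h2 : Z ω = t) => absurd h2 (ne_of_lt h1)))
    (hZ (measurableSet_singleton t))

noncomputable def auxV {Ω : Type*} [MeasurableSpace Ω] (P : Measure Ω) (Z U : Ω → ℝ) :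
    Ω → ℝ := fun ω =>
  (P {ω' | Z ω' < Z ω}).toReal + (P ({ω' | Z ω' = Z ω} ∩ {ω' | U ω' ≤ U ω})).toReal

lemma aux_V_measurable {Ω : Type*} [MeasurableSpace Ω] (P : Measure Ω) [IsProbabilityMeasure P]
    {Z U : Ω → ℝ} (hZ : Measurable Z) (hU : Measurable U) :
    Measurable (auxV P Z U) := by
  have hm' : Monotone (fun t => (P {ω | Z ω < t}).toReal) := by
    intro a b hab
    exact ENNReal.toReal_mono (measure_ne_top _ _)
      (measure_mono (fun ω (h : Z ω < a) => lt_of_lt_of_le h hab))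
  have hMc : Monotone (fun t => (P {ω | Z ω ≤ t}).toReal) := by
    intro a b hab
    exact ENNReal.toReal_mono (measure_ne_top _ _)
      (measure_mono (fun ω (h : Z ω ≤ a) => le_trans h hab))
  have h1 : Measurable (fun ω => (P {ω' | Z ω' < Z ω}).toReal) := by
    have : (fun ω => (P {ω' | Z ω' < Z ω}).toReal)
        = (fun t => (P {ω | Z ω < t}).toReal) ∘ Z := rfl
    rw [this]
    exact hm'.measurable.comp hZ
  -- countable atoms
  set A : Set ℝ := {t | P {ω | Z ω = t} ≠ 0} with hA
  have hAcnt : A.Countable := by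
    have hsub : A ⊆ {t | ¬ContinuousAt (fun t => (P {ω | Z ω ≤ t}).toReal) t} := by
      intro t ht
      simp only [Set.mem_setOf_eq] at ht ⊢
      intro hcont
      have hseq : Tendsto (fun n : ℕ => t - 1 / (n + 1)) atTop (𝓝 t) := by
        simpa using (tendsto_const_nhds (x := t)).sub tendsto_one_div_add_atTop_nhds_zero_nat
      have hlim := (hcont.tendsto).comp hseq
      have hle : ∀ n : ℕ, (P {ω | Z ω ≤ t - 1 / (n + 1)}).toReal ≤ (P {ω | Z ω < t}).toReal := by
        intro n
        refine ENNReal.toReal_mono (measure_ne_top _ _) (measure_mono ?_)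
        intro ω (h : Z ω ≤ t - 1/(n+1))
        have : (0:ℝ) < 1 / (n + 1) := by positivity
        show Z ω < t
        linarith
      have hle' : (P {ω | Z ω ≤ t}).toReal ≤ (P {ω | Z ω < t}).toReal :=
        le_of_tendsto hlim (Eventually.of_forall hle)
      have hsplit : P {ω | Z ω ≤ t} = P {ω | Z ω < t} + P {ω | Z ω = t} :=
        aux_le_split P hZ t
      have hpos : 0 < (P {ω | Z ω = t}).toReal :=
        ENNReal.toReal_pos ht (measure_ne_top _ _)
      rw [hsplit, ENNReal.toReal_add (measure_ne_top _ _) (measure_ne_top _ _)] at hle'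
      linarith
    exact (hMc.countable_not_continuousAt).mono hsub
  have : Countable ↥A := hAcnt.to_subtype
  -- second summand via ENNReal tsum
  set ψ : Ω → ℝ≥0∞ := fun ω => P ({ω' | Z ω' = Z ω} ∩ {ω' | U ω' ≤ U ω}) with hψdef
  have hψeq : ψ = fun ω => ∑' (a : ↥A),
      (if Z ω = (a : ℝ) then P ({ω' | Z ω' = (a : ℝ)} ∩ {ω' | U ω' ≤ U ω}) else 0) := by
    funext ω
    by_cases h1 : P {ω' | Z ω' = Z ω} = 0
    · have hψ0 : ψ ω = 0 := by
        refine le_antisymm (le_trans (measure_mono Set.inter_subset_left) ?_) zero_le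
        rw [h1]
      rw [hψ0]
      symm
      refine (ENNReal.tsum_eq_zero).2 (fun a => ?_)
      by_cases h2 : Z ω = (a : ℝ)
      · exfalso
        apply a.2
        rw [← h2]
        exact h1
      · simp [h2]
    · have ha : (Z ω) ∈ A := h1
      rw [tsum_eq_single (⟨Z ω, ha⟩ : ↥A)]
      · simp [ψ]
      · intro b hb
        by_cases h2 : Z ω = (b : ℝ)
        · exfalso
          apply hb
          apply Subtype.ext
          simp [← h2]
        · simp [h2]
  have hψm : Measurable ψ := by
    rw [hψeq]
    refine Measurable.ennreal_tsum (fun a => ?_)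
    have hK : Monotone (fun u => P ({ω' | Z ω' = (a : ℝ)} ∩ {ω' | U ω' ≤ u})) := by
      intro x y hxy
      exact measure_mono (Set.inter_subset_inter_right _
        (fun ω (h : U ω ≤ x) => le_trans h hxy))
    have hKm : Measurable (fun ω => P ({ω' | Z ω' = (a : ℝ)} ∩ {ω' | U ω' ≤ U ω})) :=
      hK.measurable.comp hU
    exact Measurable.ite (hZ (measurableSet_singleton _)) hKm measurable_const
  exact h1.add hψm.ennreal_toReal
lemma aux_V_nonneg {Ω : Type*} [MeasurableSpace Ω] (P : Measure Ω) (Z U : Ω → ℝ) (ω : Ω) :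
    0 ≤ auxV P Z U ω := add_nonneg ENNReal.toReal_nonneg ENNReal.toReal_nonneg

lemma aux_V_lb {Ω : Type*} [MeasurableSpace Ω] (P : Measure Ω) (Z U : Ω → ℝ) (ω : Ω) :
    (P {ω' | Z ω' < Z ω}).toReal ≤ auxV P Z U ω :=
  le_add_of_nonneg_right ENNReal.toReal_nonneg

lemma aux_V_ub {Ω : Type*} [MeasurableSpace Ω] (P : Measure Ω) [IsProbabilityMeasure P]
    {Z : Ω → ℝ} (hZ : Measurable Z) (U : Ω → ℝ) (ω : Ω) :
    auxV P Z U ω ≤ (P {ω' | Z ω' ≤ Z ω}).toReal := by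
  have h1 : (P ({ω' | Z ω' = Z ω} ∩ {ω' | U ω' ≤ U ω})).toReal
      ≤ (P {ω' | Z ω' = Z ω}).toReal :=
    ENNReal.toReal_mono (measure_ne_top _ _) (measure_mono Set.inter_subset_left)
  have h2 : (P {ω' | Z ω' ≤ Z ω}).toReal
      = (P {ω' | Z ω' < Z ω}).toReal + (P {ω' | Z ω' = Z ω}).toReal := by
    rw [aux_le_split P hZ (Z ω), ENNReal.toReal_add (measure_ne_top _ _) (measure_ne_top _ _)]
  rw [auxV, h2]
  linarith

lemma aux_V_le_one {Ω : Type*} [MeasurableSpace Ω] (P : Measure Ω) [IsProbabilityMeasure P]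
    {Z : Ω → ℝ} (hZ : Measurable Z) (U : Ω → ℝ) (ω : Ω) :
    auxV P Z U ω ≤ 1 := by
  refine le_trans (aux_V_ub P hZ U ω) ?_
  have := ENNReal.toReal_mono (a := P {ω' | Z ω' ≤ Z ω}) (b := 1) (by simp) prob_le_one
  simpa using this

lemma aux_V_law {Ω : Type*} [MeasurableSpace Ω] (P : Measure Ω) [IsProbabilityMeasure P]
    {Z U : Ω → ℝ} (hZ : Measurable Z) (hU : Measurable U)
    (hU1 : ∀ ω, U ω ≤ 1) (hU00 : P {ω | U ω ≤ 0} = 0)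
    (hUatom : ∀ u, P {ω | U ω = u} = 0)
    {v : ℝ} (hv0 : 0 ≤ v) (hv1 : v < 1) :
    (P {ω | auxV P Z U ω ≤ v}).toReal = v := by
  set m' : ℝ → ℝ := fun t => (P {ω | Z ω < t}).toReal with hm'def
  set Mc : ℝ → ℝ := fun t => (P {ω | Z ω ≤ t}).toReal with hMcdef
  have hMcmono : Monotone Mc := by
    intro a b hab
    exact ENNReal.toReal_mono (measure_ne_top _ _)
      (measure_mono (fun ω (h : Z ω ≤ a) => le_trans h hab))
  have hsplit : ∀ t, Mc t = m' t + (P {ω | Z ω = t}).toReal := by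
    intro t
    rw [hMcdef, hm'def]
    simp only
    rw [aux_le_split P hZ t, ENNReal.toReal_add (measure_ne_top _ _) (measure_ne_top _ _)]
  have hcross : ∀ t t' : ℝ, t < t' → Mc t ≤ m' t' := by
    intro t t' h
    exact ENNReal.toReal_mono (measure_ne_top _ _)
      (measure_mono (fun ω (hh : Z ω ≤ t) => lt_of_le_of_lt hh h))
  have hVlb : ∀ ω, m' (Z ω) ≤ auxV P Z U ω := fun ω => aux_V_lb P Z U ω
  have hVub : ∀ ω, auxV P Z U ω ≤ Mc (Z ω) := fun ω => aux_V_ub P hZ U ω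
  by_cases hex : ∃ t, m' t ≤ v ∧ v < Mc t
  · obtain ⟨tb, htb1, htb2⟩ := hex
    set s := v - m' tb with hs
    have hs0 : 0 ≤ s := by simp [hs]; linarith
    have hsΔ : s < (P {ω | Z ω = tb}).toReal := by
      have := hsplit tb
      simp only [hs]
      linarith
    have hseteq : {ω | auxV P Z U ω ≤ v} = {ω | Z ω < tb}
        ∪ ({ω | Z ω = tb} ∩
          {ω | (P ({ω' | Z ω' = tb} ∩ {ω' | U ω' ≤ U ω})).toReal ≤ s}) := by
      ext ω
      simp only [Set.mem_union, Set.mem_inter_iff, Set.mem_setOf_eq]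
      constructor
      · intro h
        rcases lt_trichotomy (Z ω) tb with hzt | hzt | hzt
        · exact Or.inl hzt
        · refine Or.inr ⟨hzt, ?_⟩
          have : auxV P Z U ω = m' tb
              + (P ({ω' | Z ω' = tb} ∩ {ω' | U ω' ≤ U ω})).toReal := by
            rw [auxV, hzt]
          rw [this] at h
          linarith
        · exfalso
          have h1 : Mc tb ≤ m' (Z ω) := hcross tb (Z ω) hzt
          have h2 := hVlb ω
          linarith
      · rintro (h | ⟨h1, h2⟩)
        · have h1 : Mc (Z ω) ≤ m' tb := hcross (Z ω) tb h
          have h2 := hVub ω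
          linarith
        · have : auxV P Z U ω = m' tb
              + (P ({ω' | Z ω' = tb} ∩ {ω' | U ω' ≤ U ω})).toReal := by
            rw [auxV, h1]
          rw [this]
          linarith
    have hmright : MeasurableSet ({ω | Z ω = tb} ∩
        {ω | (P ({ω' | Z ω' = tb} ∩ {ω' | U ω' ≤ U ω})).toReal ≤ s}) := by
      refine (hZ (measurableSet_singleton tb)).inter ?_
      have hgtmono : Monotone (fun u => (P ({ω' | Z ω' = tb} ∩ {ω' | U ω' ≤ u})).toReal) := by
        intro a b hab
        exact ENNReal.toReal_mono (measure_ne_top _ _)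
          (measure_mono (Set.inter_subset_inter_right _
            (fun ω (h : U ω ≤ a) => le_trans h hab)))
      exact (hgtmono.measurable.comp hU) measurableSet_Iic
    have hdisj : Disjoint {ω | Z ω < tb} ({ω | Z ω = tb} ∩
        {ω | (P ({ω' | Z ω' = tb} ∩ {ω' | U ω' ≤ U ω})).toReal ≤ s}) := by
      rw [Set.disjoint_left]
      rintro ω (h1 : Z ω < tb) ⟨h2, _⟩
      exact absurd h2 (ne_of_lt h1)
    rw [hseteq, measure_union hdisj hmright,
      ENNReal.toReal_add (measure_ne_top _ _) (measure_ne_top _ _),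
      aux_tie P hZ hU hU1 hU00 hUatom tb hs0 hsΔ]
    simp [hs, hm'def]
  · -- no atom straddles v
    have hseteq : {ω | auxV P Z U ω ≤ v} = {ω | Mc (Z ω) ≤ v} := by
      ext ω
      simp only [Set.mem_setOf_eq]
      constructor
      · intro h
        by_contra hc
        push_neg at hc
        rcases le_or_gt (m' (Z ω)) v with h2 | h2
        · exact hex ⟨Z ω, h2, hc⟩
        · have := hVlb ω; linarith
      · intro h
        exact le_trans (hVub ω) h
    rw [hseteq]
    by_cases hS1 : ({t | Mc t ≤ v}).Nonempty
    · have hbdd : BddAbove {t | Mc t ≤ v} := by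
        by_contra hnb
        have hge : ∀ n : ℕ, P {ω | Z ω ≤ (n:ℝ)} ≤ ENNReal.ofReal v := by
          intro n
          obtain ⟨t, htS, htn⟩ := not_bddAbove_iff.1 hnb n
          refine le_trans (measure_mono (fun ω (h : Z ω ≤ (n:ℝ)) => le_trans h htn.le)) ?_
          refine (ENNReal.le_ofReal_iff_toReal_le (measure_ne_top _ _) hv0).2 ?_
          exact htS
        have huniv : (Set.univ : Set Ω) = ⋃ n : ℕ, {ω | Z ω ≤ (n:ℝ)} := by
          ext ω
          simp only [Set.mem_univ, Set.mem_iUnion, Set.mem_setOf_eq, true_iff]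
          obtain ⟨n, hn⟩ := exists_nat_ge (Z ω)
          exact ⟨n, hn⟩
        have hmono : Monotone (fun n : ℕ => {ω | Z ω ≤ (n:ℝ)}) := by
          intro a b hab
          exact fun ω (h : Z ω ≤ (a:ℝ)) => le_trans h (by exact_mod_cast Nat.cast_le.2 hab)
        have h1 : (1 : ℝ≥0∞) = P (Set.univ) := (measure_univ).symm
        have : (1:ℝ≥0∞) ≤ ENNReal.ofReal v := by
          rw [h1, huniv, Directed.measure_iUnion hmono.directed_le]
          exact iSup_le hge
        have := ENNReal.toReal_mono (by simp) this
        rw [ENNReal.toReal_ofReal hv0] at this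
        simp at this
        linarith
      set σ := sSup {t | Mc t ≤ v} with hσ
      by_cases hMcσ : Mc σ ≤ v
      · have hSeq : {t | Mc t ≤ v} = Set.Iic σ := by
          apply Set.Subset.antisymm
          · exact fun t ht => le_csSup hbdd ht
          · exact fun t ht => le_trans (hMcmono ht) hMcσ
        have hseteq2 : {ω | Mc (Z ω) ≤ v} = {ω | Z ω ≤ σ} := by
          ext ω
          constructor
          · intro h
            have : Z ω ∈ {t | Mc t ≤ v} := h
            rw [hSeq] at this
            exact this
          · intro h
            exact le_trans (hMcmono (h : Z ω ≤ σ)) hMcσ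
        rw [hseteq2]
        refine le_antisymm hMcσ ?_
        have hInter : {ω | Z ω ≤ σ} = ⋂ n : ℕ, {ω | Z ω ≤ σ + 1 / (n + 1)} := by
          ext ω
          simp only [Set.mem_iInter, Set.mem_setOf_eq]
          constructor
          · intro h n
            have : (0:ℝ) < 1 / (n + 1) := by positivity
            linarith
          · intro h
            by_contra hlt
            push_neg at hlt
            obtain ⟨n, hn⟩ := exists_nat_one_div_lt (sub_pos.2 hlt)
            have := h n
            linarith
        have hanti : Antitone (fun n : ℕ => {ω | Z ω ≤ σ + 1 / (n + 1)}) := by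
          intro a b hab ω (h : Z ω ≤ σ + 1/(b+1))
          have h1 : (1:ℝ) / (b + 1) ≤ 1 / (a + 1) := by
            apply one_div_le_one_div_of_le (by positivity)
            exact_mod_cast add_le_add_left (Nat.cast_le.2 hab) 1
          show Z ω ≤ σ + 1/(a+1)
          linarith
        have hinf : P {ω | Z ω ≤ σ} = ⨅ n : ℕ, P {ω | Z ω ≤ σ + 1 / (n + 1)} := by
          rw [hInter]
          exact Directed.measure_iInter (fun n => (hZ measurableSet_Iic).nullMeasurableSet)
            hanti.directed_ge ⟨0, measure_ne_top _ _⟩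
        have hboundn : ∀ n : ℕ, ENNReal.ofReal v ≤ P {ω | Z ω ≤ σ + 1 / (n + 1)} := by
          intro n
          have hpos : (0:ℝ) < 1 / (n+1) := by positivity
          have hnot : ¬ (σ + 1 / (n+1) ∈ {t | Mc t ≤ v}) := by
            intro hmem
            have := le_csSup hbdd hmem
            linarith
          rw [Set.mem_setOf_eq, not_le] at hnot
          rw [ENNReal.ofReal_le_iff_le_toReal (measure_ne_top _ _)]
          exact hnot.le
        have : ENNReal.ofReal v ≤ P {ω | Z ω ≤ σ} := by
          rw [hinf]; exact le_iInf hboundn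
        exact (ENNReal.ofReal_le_iff_le_toReal (measure_ne_top _ _)).1 this
      · exfalso
        -- show m' σ ≤ v, contradicting hex
        have hm'σ : m' σ ≤ v := by
          have hUnion : {ω | Z ω < σ} = ⋃ n : ℕ, {ω | Z ω ≤ σ - 1 / (n + 1)} := by
            ext ω
            simp only [Set.mem_iUnion, Set.mem_setOf_eq]
            constructor
            · intro h
              obtain ⟨n, hn⟩ := exists_nat_one_div_lt (sub_pos.2 h)
              exact ⟨n, by linarith⟩
            · rintro ⟨n, hn⟩
              have : (0:ℝ) < 1 / (n + 1) := by positivity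
              linarith
          have hmono2 : Monotone (fun n : ℕ => {ω | Z ω ≤ σ - 1 / (n + 1)}) := by
            intro a b hab ω (h : Z ω ≤ σ - 1/(a+1))
            have h1 : (1:ℝ) / (b + 1) ≤ 1 / (a + 1) := by
              apply one_div_le_one_div_of_le (by positivity)
              exact_mod_cast add_le_add_left (Nat.cast_le.2 hab) 1
            show Z ω ≤ σ - 1/(b+1)
            linarith
          have hboundn : ∀ n : ℕ, P {ω | Z ω ≤ σ - 1 / (n + 1)} ≤ ENNReal.ofReal v := by
            intro n
            have hpos : (0:ℝ) < 1 / (n+1) := by positivity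
            obtain ⟨t, htS, ht⟩ := exists_lt_of_lt_csSup hS1 (by linarith : σ - 1/(n+1) < σ)
            refine le_trans (measure_mono (fun ω (h : Z ω ≤ σ - 1/(n+1)) =>
              le_trans h ht.le)) ?_
            refine (ENNReal.le_ofReal_iff_toReal_le (measure_ne_top _ _) hv0).2 ?_
            exact htS
          have : P {ω | Z ω < σ} ≤ ENNReal.ofReal v := by
            rw [hUnion, Directed.measure_iUnion hmono2.directed_le]
            exact iSup_le hboundn
          exact ENNReal.toReal_le_of_le_ofReal hv0 this
        exact hex ⟨σ, hm'σ, not_le.1 hMcσ⟩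
    · -- S₁ empty : v = 0 and event empty
      have hempty : {ω | Mc (Z ω) ≤ v} = ∅ := by
        ext ω
        simp only [Set.mem_setOf_eq, Set.mem_empty_iff_false, iff_false]
        intro h
        exact hS1 ⟨Z ω, h⟩
      have hv0' : v ≤ 0 := by
        have hInter : (⋂ n : ℕ, {ω | Z ω ≤ -(n:ℝ)}) = ∅ := by
          ext ω
          simp only [Set.mem_iInter, Set.mem_setOf_eq, Set.mem_empty_iff_false, iff_false]
          push_neg
          obtain ⟨n, hn⟩ := exists_nat_gt (-(Z ω))
          exact ⟨n, by linarith⟩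
        have hanti : Antitone (fun n : ℕ => {ω | Z ω ≤ -(n:ℝ)}) := by
          intro a b hab ω (h : Z ω ≤ -(b:ℝ))
          have : (a:ℝ) ≤ b := Nat.cast_le.2 hab
          show Z ω ≤ -(a:ℝ)
          linarith
        have h1 : P (⋂ n : ℕ, {ω | Z ω ≤ -(n:ℝ)}) = ⨅ n : ℕ, P {ω | Z ω ≤ -(n:ℝ)} :=
          Directed.measure_iInter (fun n => (hZ measurableSet_Iic).nullMeasurableSet)
            hanti.directed_ge ⟨0, measure_ne_top _ _⟩
        rw [hInter] at h1
        simp only [measure_empty] at h1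
        have h0 : (0:ℝ≥0∞) = ⨅ n : ℕ, P {ω | Z ω ≤ -(n:ℝ)} := h1
        have hge : ∀ n : ℕ, ENNReal.ofReal v ≤ P {ω | Z ω ≤ -(n:ℝ)} := by
          intro n
          have hnot : ¬ (Mc (-(n:ℝ)) ≤ v) := fun h => hS1 ⟨-(n:ℝ), h⟩
          rw [ENNReal.ofReal_le_iff_le_toReal (measure_ne_top _ _)]
          exact (not_le.1 hnot).le
        have : ENNReal.ofReal v ≤ 0 := h0 ▸ le_iInf hge
        have := ENNReal.toReal_mono (by simp) this
        rw [ENNReal.toReal_ofReal hv0] at this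
        simpa using this
      rw [hempty]
      simp [le_antisymm hv0' hv0]
-- fract of x in [1,2)
lemma aux_fract_shift {x : ℝ} (h1 : 1 ≤ x) (h2 : x < 2) : Int.fract x = x - 1 := by
  have hfl : ⌊x⌋ = 1 := by
    rw [Int.floor_eq_iff]
    constructor <;> push_cast <;> linarith
  rw [← Int.self_sub_floor, hfl]
  norm_num

lemma aux_construct {Ω : Type*} [MeasurableSpace Ω] (P : Measure Ω) [IsProbabilityMeasure P]
    {F₀ : ℝ → ℝ} (hmono : Monotone F₀) (hcont : Continuous F₀)
    (hbot : Tendsto F₀ atBot (𝓝 0)) (htop : Tendsto F₀ atTop (𝓝 1))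
    {Z : Ω → ℝ} (hZ : Measurable Z)
    {Y₀ : Ω → ℝ} (hY₀m : Measurable Y₀) (hY₀law : ∀ z, cdfOf P Y₀ z = F₀ z)
    {κ ε : ℝ} (hκ : 0 ≤ κ) (hε : 0 < ε) (hθ1 : κ + ε < 1) :
    (∀ t, F₀ t ≤ κ + (P {ω | Z ω < t}).toReal) →
    ∃ Y' : Ω → ℝ, Measurable Y' ∧ (∀ z, cdfOf P Y' z = F₀ z) ∧
      (P {ω | Y' ω ≤ Z ω}).toReal ≤ κ + ε := by
  intro hC
  set θ := κ + ε with hθdef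
  have hθ0 : 0 < θ := by positivity
  set U : Ω → ℝ := fun ω => F₀ (Y₀ ω) with hUdef
  have hUm : Measurable U := hcont.measurable.comp hY₀m
  have hU0 : ∀ ω, 0 ≤ U ω := fun ω => aux_F0_nonneg hmono hbot _
  have hU1 : ∀ ω, U ω ≤ 1 := fun ω => aux_F0_le_one hmono htop _
  have hUlaw : ∀ u : ℝ, 0 ≤ u → u < 1 → (P {ω | U ω ≤ u}).toReal = u := fun u hu0 hu1 =>
    aux_unif_law P hmono hcont hbot htop hY₀law hu0 hu1
  have hUatom : ∀ u, P {ω | U ω = u} = 0 :=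
    aux_unif_no_atom P hUm hU0 hU1 hUlaw
  have hU00 : P {ω | U ω ≤ 0} = 0 := by
    have := hUlaw 0 le_rfl one_pos
    exact ((ENNReal.toReal_eq_zero_iff _).1 this).resolve_right (measure_ne_top _ _)
  set V : Ω → ℝ := auxV P Z U with hVdef
  have hVm : Measurable V := aux_V_measurable P hZ hUm
  have hVlaw : ∀ v : ℝ, 0 ≤ v → v < 1 → (P {ω | V ω ≤ v}).toReal = v := fun v hv0 hv1 =>
    aux_V_law P hZ hUm hU1 hU00 hUatom hv0 hv1
  have hV0 : ∀ ω, 0 ≤ V ω := aux_V_nonneg P Z U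
  have hV1 : ∀ ω, V ω ≤ 1 := aux_V_le_one P hZ U
  have hVatom : ∀ v, P {ω | V ω = v} = 0 :=
    aux_unif_no_atom P hVm hV0 hV1 hVlaw
  set W : Ω → ℝ := fun ω => if V ω = 1 - θ then (1:ℝ)/2 else Int.fract (V ω + θ) with hWdef
  have hWm : Measurable W :=
    Measurable.ite (hVm (measurableSet_singleton (1 - θ))) measurable_const
      (measurable_fract.comp (hVm.add measurable_const))
  have hW0 : ∀ ω, 0 < W ω := by
    intro ω
    rw [hWdef]
    by_cases h : V ω = 1 - θ
    · simp [h]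
    · simp only [h, if_false]
      rcases lt_or_ge (V ω + θ) 1 with hc | hc
      · rw [Int.fract_eq_self.2 ⟨by have := hV0 ω; linarith, hc⟩]
        have := hV0 ω; linarith
      · have hne : 1 < V ω + θ := by
          rcases lt_or_eq_of_le hc with h' | h'
          · exact h'
          · exfalso; exact h (by linarith)
        rw [aux_fract_shift hc (by have := hV1 ω; linarith)]
        linarith
  have hW1 : ∀ ω, W ω < 1 := by
    intro ω
    rw [hWdef]
    by_cases h : V ω = 1 - θ
    · simp [h]; norm_num
    · simp only [h, if_false]
      exact Int.fract_lt_one _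
  -- law of W
  have hWlaw : ∀ c : ℝ, 0 ≤ c → c < 1 → (P {ω | W ω ≤ c}).toReal = c := by
    intro c hc0 hc1
    have hsplitW : {ω | W ω ≤ c} = ({ω | V ω ≤ c - θ}
        ∪ {ω | 1 - θ < V ω ∧ V ω ≤ c + 1 - θ}) ∪ ({ω | V ω = 1 - θ} ∩ {ω | W ω ≤ c}) := by
      ext ω
      simp only [Set.mem_union, Set.mem_inter_iff, Set.mem_setOf_eq]
      constructor
      · intro h
        by_cases hv : V ω = 1 - θ
        · exact Or.inr ⟨hv, h⟩
        · rcases lt_or_ge (V ω) (1 - θ) with hlt | hge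
          · left; left
            have hfr : Int.fract (V ω + θ) = V ω + θ :=
              Int.fract_eq_self.2 ⟨by have := hV0 ω; linarith, by linarith⟩
            have : W ω = V ω + θ := by rw [hWdef]; simp only [hv, if_false]; exact hfr
            rw [this] at h; linarith
          · left; right
            have hgt : 1 - θ < V ω := lt_of_le_of_ne hge (Ne.symm hv)
            have hfr : Int.fract (V ω + θ) = V ω + θ - 1 :=
              aux_fract_shift (by linarith) (by have := hV1 ω; linarith)
            have : W ω = V ω + θ - 1 := by rw [hWdef]; simp only [hv, if_false]; exact hfr
            rw [this] at h
            exact ⟨hgt, by linarith⟩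
      · rintro ((h | ⟨h1, h2⟩) | ⟨h1, h2⟩)
        · have hlt : V ω < 1 - θ := by linarith
          have hv : ¬ (V ω = 1 - θ) := by intro hh; linarith
          have hfr : Int.fract (V ω + θ) = V ω + θ :=
            Int.fract_eq_self.2 ⟨by have := hV0 ω; linarith, by linarith⟩
          show W ω ≤ c
          rw [hWdef]; simp only [hv, if_false]; rw [hfr]; linarith
        · have hv : ¬ (V ω = 1 - θ) := by intro hh; linarith
          have hfr : Int.fract (V ω + θ) = V ω + θ - 1 :=
            aux_fract_shift (by linarith) (by have := hV1 ω; linarith)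
          show W ω ≤ c
          rw [hWdef]; simp only [hv, if_false]; rw [hfr]; linarith
        · exact h2
    have hnull : P ({ω | V ω = 1 - θ} ∩ {ω | W ω ≤ c}) = 0 :=
      measure_mono_null Set.inter_subset_left (hVatom (1 - θ))
    have hm1 : MeasurableSet {ω | V ω ≤ c - θ} := hVm measurableSet_Iic
    have hm2 : MeasurableSet {ω | 1 - θ < V ω ∧ V ω ≤ c + 1 - θ} := by
      have : {ω | 1 - θ < V ω ∧ V ω ≤ c + 1 - θ}
          = {ω | V ω ≤ c + 1 - θ} ∩ {ω | 1 - θ < V ω} := by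
        ext ω; simp only [Set.mem_inter_iff, Set.mem_setOf_eq]; tauto
      rw [this]
      exact (hVm measurableSet_Iic).inter (hVm measurableSet_Ioi)
    have hPeq : P {ω | W ω ≤ c} = P ({ω | V ω ≤ c - θ}
        ∪ {ω | 1 - θ < V ω ∧ V ω ≤ c + 1 - θ}) := by
      rw [hsplitW]
      refine le_antisymm (le_trans (measure_union_le _ _) ?_) (measure_mono Set.subset_union_left)
      rw [hnull, add_zero]
    have hdisj : Disjoint {ω | V ω ≤ c - θ} {ω | 1 - θ < V ω ∧ V ω ≤ c + 1 - θ} := by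
      rw [Set.disjoint_left]
      rintro ω (h1 : V ω ≤ c - θ) ⟨h2, _⟩
      linarith
    have hPadd : P ({ω | V ω ≤ c - θ} ∪ {ω | 1 - θ < V ω ∧ V ω ≤ c + 1 - θ})
        = P {ω | V ω ≤ c - θ} + P {ω | 1 - θ < V ω ∧ V ω ≤ c + 1 - θ} :=
      measure_union hdisj hm2
    -- second piece as difference
    have hdiff : {ω | 1 - θ < V ω ∧ V ω ≤ c + 1 - θ}
        = {ω | V ω ≤ c + 1 - θ} \ {ω | V ω ≤ 1 - θ} := by
      ext ω
      simp only [Set.mem_diff, Set.mem_setOf_eq, not_le]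
      tauto
    have hsub : {ω | V ω ≤ 1 - θ} ⊆ {ω | V ω ≤ c + 1 - θ} := by
      intro ω (h : V ω ≤ 1 - θ); show V ω ≤ c + 1 - θ; linarith
    have hPdiff : P {ω | 1 - θ < V ω ∧ V ω ≤ c + 1 - θ}
        = P {ω | V ω ≤ c + 1 - θ} - P {ω | V ω ≤ 1 - θ} := by
      rw [hdiff]
      exact measure_diff hsub (hVm measurableSet_Iic).nullMeasurableSet (measure_ne_top _ _)
    have hval1θ : (P {ω | V ω ≤ 1 - θ}).toReal = 1 - θ := hVlaw (1 - θ) (by linarith) (by linarith)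
    have htoReal2 : (P {ω | 1 - θ < V ω ∧ V ω ≤ c + 1 - θ}).toReal
        = (P {ω | V ω ≤ c + 1 - θ}).toReal - (1 - θ) := by
      rw [hPdiff, ENNReal.toReal_sub_of_le (measure_mono hsub) (measure_ne_top _ _), hval1θ]
    rw [hPeq, hPadd, ENNReal.toReal_add (measure_ne_top _ _) (measure_ne_top _ _), htoReal2]
    rcases lt_or_ge c θ with hcθ | hcθ
    · -- c < θ : first piece empty, V ≤ c+1-θ has measure c+1-θ
      have hempty : {ω | V ω ≤ c - θ} = ∅ := by
        ext ω
        simp only [Set.mem_setOf_eq, Set.mem_empty_iff_false, iff_false, not_le]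
        have := hV0 ω; linarith
      have hval2 : (P {ω | V ω ≤ c + 1 - θ}).toReal = c + 1 - θ :=
        hVlaw _ (by linarith) (by linarith)
      rw [hempty, hval2]
      simp
    · -- c ≥ θ : second set is everything
      have hval1 : (P {ω | V ω ≤ c - θ}).toReal = c - θ := hVlaw _ (by linarith) (by linarith)
      have huniv : {ω | V ω ≤ c + 1 - θ} = Set.univ := by
        ext ω
        simp only [Set.mem_setOf_eq, Set.mem_univ, iff_true]
        have := hV1 ω; linarith
      rw [hval1, huniv]
      simp
  -- define Y'
  set Y' : Ω → ℝ := fun ω => auxQ F₀ (W ω) with hY'def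
  have hgal : ∀ ω x, Y' ω ≤ x ↔ W ω ≤ F₀ x := fun ω x =>
    aux_Q_gc hmono hcont hbot htop (hW0 ω) (hW1 ω) x
  have hY'm : Measurable Y' := by
    apply measurable_of_Iic
    intro x
    have : Y' ⁻¹' (Set.Iic x) = {ω | W ω ≤ F₀ x} := by
      ext ω
      simp only [Set.mem_preimage, Set.mem_Iic, Set.mem_setOf_eq]
      exact hgal ω x
    rw [this]
    exact hWm measurableSet_Iic
  have hY'law : ∀ x, cdfOf P Y' x = F₀ x := by
    intro x
    have hseteq : {ω | Y' ω ≤ x} = {ω | W ω ≤ F₀ x} := by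
      ext ω; exact hgal ω x
    rw [cdfOf]
    simp only [hseteq]
    rcases lt_or_ge (F₀ x) 1 with h | h
    · exact hWlaw (F₀ x) (aux_F0_nonneg hmono hbot x) h
    · have h1 : F₀ x = 1 := le_antisymm (aux_F0_le_one hmono htop x) h
      have huniv : {ω | W ω ≤ F₀ x} = Set.univ := by
        ext ω
        simp only [Set.mem_setOf_eq, Set.mem_univ, iff_true]
        rw [h1]
        exact (hW1 ω).le
      rw [huniv, h1]
      simp
  refine ⟨Y', hY'm, hY'law, ?_⟩
  -- final bound
  have hsub : {ω | Y' ω ≤ Z ω} ⊆ {ω | 1 - θ ≤ V ω} := by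
    intro ω h
    rw [Set.mem_setOf_eq] at h ⊢
    by_contra hlt
    push_neg at hlt
    have hv : ¬ (V ω = 1 - θ) := by intro hh; linarith
    have hfr : Int.fract (V ω + θ) = V ω + θ :=
      Int.fract_eq_self.2 ⟨by have := hV0 ω; linarith, by linarith⟩
    have hWω : W ω = V ω + θ := by rw [hWdef]; simp only [hv, if_false]; exact hfr
    have h2 : W ω ≤ F₀ (Z ω) := (hgal ω (Z ω)).1 h
    have h3 : F₀ (Z ω) ≤ κ + (P {ω' | Z ω' < Z ω}).toReal := hC (Z ω)
    have h4 : (P {ω' | Z ω' < Z ω}).toReal ≤ V ω := aux_V_lb P Z U ω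
    rw [hWω] at h2
    have : V ω + θ ≤ κ + V ω := by linarith
    rw [hθdef] at this
    linarith
  have hbound : (P {ω | 1 - θ ≤ V ω}).toReal ≤ θ := by
    by_contra hgt
    push_neg at hgt
    set p := (P {ω | 1 - θ ≤ V ω}).toReal with hp
    have hkey : ∀ v : ℝ, 0 ≤ v → v < 1 - θ → v + p ≤ 1 := by
      intro v hv0 hv1
      have hdisj : Disjoint {ω | V ω ≤ v} {ω | 1 - θ ≤ V ω} := by
        rw [Set.disjoint_left]
        intro ω (h1 : V ω ≤ v) (h2 : 1 - θ ≤ V ω)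
        linarith
      have hP : P {ω | V ω ≤ v} + P {ω | 1 - θ ≤ V ω}
          = P ({ω | V ω ≤ v} ∪ {ω | 1 - θ ≤ V ω}) :=
        (measure_union hdisj (hVm measurableSet_Ici)).symm
      have hle : P ({ω | V ω ≤ v} ∪ {ω | 1 - θ ≤ V ω}) ≤ 1 := prob_le_one
      have := ENNReal.toReal_mono (by simp) (hP ▸ hle)
      rw [ENNReal.toReal_add (measure_ne_top _ _) (measure_ne_top _ _)] at this
      rw [hVlaw v hv0 (by linarith), ENNReal.toReal_one] at this
      exact this
    rcases le_or_gt (1 - θ) ((p - θ)/2) with hcase | hcase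
    · -- then p ≥ 2(1-θ)+θ = 2 - θ > 1, contradiction with p ≤ 1
      have hp1 : p ≤ 1 := by
        have := ENNReal.toReal_mono (a := P {ω | 1 - θ ≤ V ω}) (b := 1) (by simp) prob_le_one
        rw [ENNReal.toReal_one] at this
        exact this
      linarith
    · have h1 := hkey (1 - θ - (p - θ)/2) (by linarith) (by linarith)
      linarith
  refine le_trans (ENNReal.toReal_mono (measure_ne_top _ _) (measure_mono hsub)) ?_
  exact hbound



section Dist

variable {Ω : Type*} [MeasurableSpace Ω] (P : Measure Ω) [IsProbabilityMeasure P]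

lemma aux_one_sub_cdf_mem (W : Ω → ℝ) (v : ℝ) : 1 - cdfOf P W v ∈ Set.Icc (0:ℝ) 1 :=
  ⟨by have := aux_cdf_le_one P W v; linarith, by have := aux_cdf_nonneg P W v; linarith⟩

lemma aux_gS_antitone {g : ℝ → ℝ} (hg : IsDistortion g) (W : Ω → ℝ) :
    Antitone (fun v => g (1 - cdfOf P W v)) := by
  intro a b hab
  exact hg.1 (aux_one_sub_cdf_mem P W b) (aux_one_sub_cdf_mem P W a)
    (by have := aux_cdf_mono P W hab; linarith)

lemma aux_gS_mem {g : ℝ → ℝ} (hg : IsDistortion g) (W : Ω → ℝ) (v : ℝ) :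
    g (1 - cdfOf P W v) ∈ Set.Icc (0:ℝ) 1 :=
  hg.2.1 _ (aux_one_sub_cdf_mem P W v)

lemma aux_cdf_one_of_ae {W : Ω → ℝ} {M' : ℝ} (hae : ∀ᵐ ω ∂P, W ω ≤ M')
    {v : ℝ} (hv : M' ≤ v) : cdfOf P W v = 1 := by
  have h0 : P {ω | ¬ W ω ≤ M'} = 0 := by
    rw [← ae_iff]; exact hae
  have hsub : {ω | v < W ω} ⊆ {ω | ¬ W ω ≤ M'} := by
    intro ω (h : v < W ω)
    simp only [Set.mem_setOf_eq, not_le]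
    linarith
  have h1 : P {ω | v < W ω} = 0 := measure_mono_null hsub h0
  have h2 : (1:ℝ≥0∞) ≤ P {ω | W ω ≤ v} := by
    have huniv : (Set.univ : Set Ω) ⊆ {ω | W ω ≤ v} ∪ {ω | v < W ω} := by
      intro ω _
      rcases le_or_gt (W ω) v with h | h
      · exact Or.inl h
      · exact Or.inr h
    calc (1:ℝ≥0∞) = P Set.univ := measure_univ.symm
      _ ≤ P ({ω | W ω ≤ v} ∪ {ω | v < W ω}) := measure_mono huniv
      _ ≤ P {ω | W ω ≤ v} + P {ω | v < W ω} := measure_union_le _ _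
      _ = P {ω | W ω ≤ v} := by rw [h1, add_zero]
  have h3 : P {ω | W ω ≤ v} = 1 := le_antisymm prob_le_one h2
  rw [cdfOf]
  simp only [h3, ENNReal.toReal_one]

lemma aux_gS_vanish {g : ℝ → ℝ} (hg : IsDistortion g) {W : Ω → ℝ} {M' : ℝ}
    (hae : ∀ᵐ ω ∂P, W ω ≤ M') {v : ℝ} (hv : M' ≤ v) : g (1 - cdfOf P W v) = 0 := by
  rw [aux_cdf_one_of_ae P hae hv]
  simpa using hg.2.2.1

lemma aux_gS_integrableOn {g : ℝ → ℝ} (hg : IsDistortion g) {W : Ω → ℝ} {M' : ℝ}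
    (hae : ∀ᵐ ω ∂P, W ω ≤ M') :
    IntegrableOn (fun v => g (1 - cdfOf P W v)) (Set.Ioi 0) volume := by
  set f := fun v => g (1 - cdfOf P W v) with hf
  have hfm : Measurable f := (aux_gS_antitone P hg W).measurable
  set m := max M' 1 with hm
  have hIoc : IntegrableOn f (Set.Ioc 0 m) volume := by
    have hconst : IntegrableOn (fun _ : ℝ => (1:ℝ)) (Set.Ioc 0 m) volume := by
      refine integrableOn_const (ne_of_lt ?_)
      rw [Real.volume_Ioc]; exact ENNReal.ofReal_lt_top
    refine Integrable.mono' hconst hfm.aestronglyMeasurable.restrict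
      (ae_of_all _ (fun v => ?_))
    have h1 := (aux_gS_mem P hg W v).1
    have h2 := (aux_gS_mem P hg W v).2
    rw [Real.norm_eq_abs, abs_le]
    constructor <;> simp only [hf] <;> linarith
  have hIoi : IntegrableOn f (Set.Ioi m) volume := by
    have hzero : IntegrableOn (fun _ => (0:ℝ)) (Set.Ioi m) volume := integrableOn_zero
    refine hzero.congr_fun (fun v hv => ?_) measurableSet_Ioi
    exact (aux_gS_vanish P hg hae (le_trans (le_max_left _ _) (le_of_lt hv))).symm
  have hunion : Set.Ioi (0:ℝ) = Set.Ioc 0 m ∪ Set.Ioi m := by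
    rw [Set.Ioc_union_Ioi_eq_Ioi]
    exact le_trans zero_le_one (le_max_right _ _)
  rw [hunion]
  exact hIoc.union hIoi

lemma aux_distExp_nonneg {g : ℝ → ℝ} (hg : IsDistortion g) (W : Ω → ℝ) :
    0 ≤ distExp g P W :=
  setIntegral_nonneg measurableSet_Ioi (fun v _ => (aux_gS_mem P hg W v).1)

end Dist
section Dist2

variable {Ω : Type*} [MeasurableSpace Ω] (P : Measure Ω) [IsProbabilityMeasure P]

-- the common change-of-variables computation on Ioo 0 d
lemma aux_Ioo_shift {G : ℝ → ℝ} (hGanti : Antitone G) (c d : ℝ) (hd : 0 ≤ d) :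
    ∫ u in Set.Ioo 0 d, G (u + c) = ∫ v in c..(d + c), G v := by
  have h1 : ∫ u in Set.Ioo 0 d, G (u + c) = ∫ u in Set.Ioc 0 d, G (u + c) :=
    (MeasureTheory.integral_Ioc_eq_integral_Ioo).symm
  have h2 : ∫ u in Set.Ioc 0 d, G (u + c) = ∫ u in (0:ℝ)..d, G (u + c) :=
    (intervalIntegral.integral_of_le hd).symm
  have h3 : ∫ u in (0:ℝ)..d, G (u + c) = ∫ v in (0 + c)..(d + c), G v :=
    intervalIntegral.integral_comp_add_right G c
  rw [h1, h2, h3, zero_add]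

lemma aux_bounded_integrableOn_Ioo {G : ℝ → ℝ} (hGm : Measurable G)
    (hbd : ∀ v, G v ∈ Set.Icc (0:ℝ) 1) (a b : ℝ) :
    IntegrableOn G (Set.Ioo a b) volume := by
  have hconst : IntegrableOn (fun _ : ℝ => (1:ℝ)) (Set.Ioo a b) volume := by
    refine integrableOn_const (ne_of_lt ?_)
    rw [Real.volume_Ioo]; exact ENNReal.ofReal_lt_top
  refine Integrable.mono' hconst hGm.aestronglyMeasurable.restrict
    (ae_of_all _ (fun v => ?_))
  have h1 := (hbd v).1
  have h2 := (hbd v).2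
  rw [Real.norm_eq_abs, abs_le]
  constructor <;> linarith

lemma aux_distExp_layer {g : ℝ → ℝ} (hg : IsDistortion g) {X : Ω → ℝ}
    {z y : ℝ} (hzy : z ≤ y) :
    distExp g P (fun ω => Ifun z y (X ω)) = ∫ v in z..y, g (1 - cdfOf P X v) := by
  set J := fun ω => Ifun z y (X ω) with hJ
  have haeJ : ∀ᵐ ω ∂P, J ω ≤ y - z := by
    refine ae_of_all _ (fun ω => ?_)
    rw [hJ]
    simp only [Ifun]
    split_ifs with h1 h2
    · linarith
    · push_neg at h1; linarith
    · exact le_rfl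
  set d := y - z with hd
  have hd0 : 0 ≤ d := by simp [hd]; linarith
  rcases eq_or_lt_of_le hd0 with hdz | hdz
  · -- d = 0
    have hLHS : distExp g P J = 0 := by
      rw [distExp]
      rw [setIntegral_congr_fun measurableSet_Ioi
        (fun u (hu : u ∈ Set.Ioi (0:ℝ)) =>
          aux_gS_vanish P hg haeJ (by rw [← hdz]; exact le_of_lt hu))]
      · exact integral_zero _ _
    have hzy' : z = y := by rw [hd] at hdz; linarith
    rw [hLHS, hzy', intervalIntegral.integral_same]
  · -- d > 0
    have hsplit : Set.Ioi (0:ℝ) = Set.Ioo 0 d ∪ Set.Ici d := by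
      ext u
      simp only [Set.mem_Ioi, Set.mem_union, Set.mem_Ioo, Set.mem_Ici]
      constructor
      · intro h
        rcases lt_or_ge u d with h2 | h2
        · exact Or.inl ⟨h, h2⟩
        · exact Or.inr h2
      · rintro (⟨h1, _⟩ | h)
        · exact h1
        · linarith
    have hdisj : Disjoint (Set.Ioo (0:ℝ) d) (Set.Ici d) := by
      rw [Set.disjoint_left]
      rintro u ⟨_, h2⟩ (h3 : d ≤ u)
      linarith
    have hint : IntegrableOn (fun u => g (1 - cdfOf P J u)) (Set.Ioi 0) volume :=
      aux_gS_integrableOn P hg haeJ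
    have hint1 : IntegrableOn (fun u => g (1 - cdfOf P J u)) (Set.Ioo 0 d) volume :=
      hint.mono_set (by rw [hsplit]; exact Set.subset_union_left)
    have hint2 : IntegrableOn (fun u => g (1 - cdfOf P J u)) (Set.Ici d) volume :=
      hint.mono_set (by rw [hsplit]; exact Set.subset_union_right)
    have htail : ∫ u in Set.Ici d, g (1 - cdfOf P J u) = 0 := by
      rw [setIntegral_congr_fun measurableSet_Ici
        (fun u (hu : u ∈ Set.Ici d) => aux_gS_vanish P hg haeJ hu)]
      exact integral_zero _ _
    have hhead : ∀ u ∈ Set.Ioo (0:ℝ) d, g (1 - cdfOf P J u) = g (1 - cdfOf P X (u + z)) := by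
      intro u hu
      obtain ⟨hu0, hud⟩ := hu
      have hseteq : {ω | J ω ≤ u} = {ω | X ω ≤ u + z} := by
        ext ω
        simp only [Set.mem_setOf_eq, hJ, Ifun]
        split_ifs with h1 h2
        · constructor
          · intro _; linarith
          · intro _; exact hu0.le
        · constructor <;> intro h <;> linarith
        · push_neg at h1 h2
          constructor <;> intro h
          · exfalso; rw [hd] at hud; linarith
          · exfalso; rw [hd] at hud; linarith
      rw [cdfOf, cdfOf, hseteq]
    rw [distExp, hsplit, setIntegral_union hdisj measurableSet_Ici hint1 hint2, htail,
      add_zero, setIntegral_congr_fun measurableSet_Ioo hhead,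
      aux_Ioo_shift (aux_gS_antitone P hg X) z d hd0]
    congr 1
    rw [hd]; ring

lemma aux_distExp_ge {g : ℝ → ℝ} (hg : IsDistortion g) {X W : Ω → ℝ}
    {MW : ℝ} (hWae : ∀ᵐ ω ∂P, W ω ≤ MW)
    {s y : ℝ} (hsy : s ≤ y)
    (hcdf : ∀ u, 0 < u → u < y - s → cdfOf P W u ≤ cdfOf P X (u + s)) :
    ∫ v in s..y, g (1 - cdfOf P X v) ≤ distExp g P W := by
  set d := y - s with hd
  have hd0 : 0 ≤ d := by simp [hd]; linarith
  have hG : Antitone (fun v => g (1 - cdfOf P X v)) := aux_gS_antitone P hg X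
  rcases eq_or_lt_of_le hd0 with hdz | hdz
  · have hys : s = y := by rw [hd] at hdz; linarith
    rw [hys, intervalIntegral.integral_same]
    exact aux_distExp_nonneg P hg W
  · have hint : IntegrableOn (fun u => g (1 - cdfOf P W u)) (Set.Ioi 0) volume :=
      aux_gS_integrableOn P hg hWae
    have h1 : ∫ u in Set.Ioo 0 d, g (1 - cdfOf P W u) ≤ distExp g P W := by
      rw [distExp]
      refine setIntegral_mono_set hint (ae_of_all _ (fun v => (aux_gS_mem P hg W v).1)) ?_
      refine HasSubset.Subset.eventuallyLE ?_
      intro u (hu : u ∈ Set.Ioo 0 d)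
      exact hu.1
    have h2 : ∫ u in Set.Ioo 0 d, g (1 - cdfOf P X (u + s))
        ≤ ∫ u in Set.Ioo 0 d, g (1 - cdfOf P W u) := by
      refine setIntegral_mono_on ?_ ?_ measurableSet_Ioo ?_
      · exact aux_bounded_integrableOn_Ioo (hG.measurable.comp (measurable_add_const s))
          (fun v => aux_gS_mem P hg X (v + s)) 0 d
      · exact hint.mono_set (fun u (hu : u ∈ Set.Ioo 0 d) => hu.1)
      · intro u hu
        refine hg.1 (aux_one_sub_cdf_mem P X (u + s)) (aux_one_sub_cdf_mem P W u) ?_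
        have := hcdf u hu.1 hu.2
        linarith
    have h3 : ∫ u in Set.Ioo 0 d, g (1 - cdfOf P X (u + s))
        = ∫ v in s..y, g (1 - cdfOf P X v) := by
      rw [aux_Ioo_shift hG s d hd0]
      congr 1
      rw [hd]; ring
    linarith
end Dist2
lemma aux_ae_restrict_ne {a b : ℝ} :
    ∀ᵐ v ∂(volume.restrict (Set.Icc a b)), v ≠ a ∧ v ≠ b := by
  have hnull : volume ({a, b} : Set ℝ) = 0 := by
    refine le_antisymm ?_ zero_le
    rw [Set.insert_eq]
    refine le_trans (measure_union_le _ _) ?_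
    simp [Real.volume_singleton]
  have hae : ∀ᵐ v ∂(volume : Measure ℝ), v ∉ ({a, b} : Set ℝ) := by
    rw [ae_iff]
    refine measure_mono_null (fun v hv => ?_) hnull
    simp only [Set.mem_setOf_eq, not_not] at hv
    exact hv
  refine ae_restrict_of_ae (hae.mono (fun v hv => ?_))
  simp only [Set.mem_insert_iff, Set.mem_singleton_iff, not_or] at hv
  exact hv

lemma aux_interval_ge_one {G : ℝ → ℝ} (hGanti : Antitone G) {c a b : ℝ} (hab : a ≤ b)
    (h : ∀ v, a < v → v < b → 1 ≤ c * G v) : b - a ≤ c * ∫ v in a..b, G v := by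
  have hiint : IntervalIntegrable G volume a b := hGanti.intervalIntegrable
  have hone : IntervalIntegrable (fun _ : ℝ => (1:ℝ)) volume a b := intervalIntegrable_const
  have hCG : IntervalIntegrable (fun v => c * G v) volume a b := hiint.const_mul c
  have hae : (fun _ : ℝ => (1:ℝ)) ≤ᵐ[volume.restrict (Set.Icc a b)] (fun v => c * G v) := by
    filter_upwards [aux_ae_restrict_ne (a := a) (b := b),
      ae_restrict_mem measurableSet_Icc] with v hv1 hv2
    exact h v (lt_of_le_of_ne hv2.1 (Ne.symm hv1.1)) (lt_of_le_of_ne hv2.2 hv1.2)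
  have := intervalIntegral.integral_mono_ae_restrict hab hone hCG hae
  rw [intervalIntegral.integral_const] at this
  rw [← intervalIntegral.integral_const_mul]
  simpa using this

lemma aux_interval_le_one {G : ℝ → ℝ} (hGanti : Antitone G) {c a b : ℝ} (hab : a ≤ b)
    (h : ∀ v, a < v → v < b → c * G v ≤ 1) : c * ∫ v in a..b, G v ≤ b - a := by
  have hiint : IntervalIntegrable G volume a b := hGanti.intervalIntegrable
  have hone : IntervalIntegrable (fun _ : ℝ => (1:ℝ)) volume a b := intervalIntegrable_const
  have hCG : IntervalIntegrable (fun v => c * G v) volume a b := hiint.const_mul c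
  have hae : (fun v => c * G v) ≤ᵐ[volume.restrict (Set.Icc a b)] (fun _ : ℝ => (1:ℝ)) := by
    filter_upwards [aux_ae_restrict_ne (a := a) (b := b),
      ae_restrict_mem measurableSet_Icc] with v hv1 hv2
    exact h v (lt_of_le_of_ne hv2.1 (Ne.symm hv1.1)) (lt_of_le_of_ne hv2.2 hv1.2)
  have := intervalIntegral.integral_mono_ae_restrict hab hCG hone hae
  rw [intervalIntegral.integral_const] at this
  rw [← intervalIntegral.integral_const_mul]
  simpa using this

section Analytic

variable {Ω : Type*} [MeasurableSpace Ω] (P : Measure Ω) [IsProbabilityMeasure P]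

lemma aux_z0_up {X : Ω → ℝ} {g : ℝ → ℝ} (hg : IsDistortion g) {ϱ : ℝ} (hϱ : 0 ≤ ϱ)
    {z₀ : ℝ} (hz₀ : z₀ = sSup {z : ℝ | 1 ≤ (1 + ϱ) * g (1 - cdfOf P X z)})
    (hXnn : ∀ ω, 0 ≤ X ω) :
    ∀ v, v < z₀ → 1 ≤ (1 + ϱ) * g (1 - cdfOf P X v) := by
  intro v hv
  have hne : ({z : ℝ | 1 ≤ (1 + ϱ) * g (1 - cdfOf P X z)}).Nonempty := by
    refine ⟨-1, ?_⟩
    have hempty : {ω | X ω ≤ (-1:ℝ)} = ∅ := by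
      ext ω
      simp only [Set.mem_setOf_eq, Set.mem_empty_iff_false, iff_false, not_le]
      have := hXnn ω; linarith
    have hcdf : cdfOf P X (-1) = 0 := by
      rw [cdfOf]; simp only [hempty, measure_empty, ENNReal.toReal_zero]
    rw [Set.mem_setOf_eq, hcdf]
    simp only [sub_zero, hg.2.2.2]
    linarith
  rw [hz₀] at hv
  obtain ⟨z', hz'mem, hz'⟩ := exists_lt_of_lt_csSup hne hv
  have hanti := aux_gS_antitone P hg X hz'.le
  have h1 : (0:ℝ) < 1 + ϱ := by linarith
  calc (1:ℝ) ≤ (1 + ϱ) * g (1 - cdfOf P X z') := hz'mem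
    _ ≤ (1 + ϱ) * g (1 - cdfOf P X v) := by
        apply mul_le_mul_of_nonneg_left hanti (by linarith)

lemma aux_z0_down {X : Ω → ℝ} {g : ℝ → ℝ} {M ϱ : ℝ}
    (hMbound : ∀ᵐ ω ∂P, X ω ≤ M) (hg : IsDistortion g)
    {z₀ : ℝ} (hz₀ : z₀ = sSup {z : ℝ | 1 ≤ (1 + ϱ) * g (1 - cdfOf P X z)}) :
    ∀ v, z₀ < v → (1 + ϱ) * g (1 - cdfOf P X v) ≤ 1 := by
  intro v hv
  have hbdd : BddAbove {z : ℝ | 1 ≤ (1 + ϱ) * g (1 - cdfOf P X z)} := by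
    refine ⟨M, fun z hz => ?_⟩
    by_contra hlt
    push_neg at hlt
    have hcdf : cdfOf P X z = 1 := aux_cdf_one_of_ae P hMbound hlt.le
    rw [Set.mem_setOf_eq, hcdf] at hz
    simp only [sub_self] at hz
    rw [hg.2.2.1] at hz
    linarith
  by_contra hgt
  push_neg at hgt
  have : v ∈ {z : ℝ | 1 ≤ (1 + ϱ) * g (1 - cdfOf P X z)} := hgt.le
  have := le_csSup hbdd this
  rw [← hz₀] at this
  linarith

lemma aux_analytic {X : Ω → ℝ} (hX : Measurable X) (hXnn : ∀ ω, 0 ≤ X ω)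
    {M : ℝ} (hMbound : ∀ᵐ ω ∂P, X ω ≤ M)
    {F₀ : ℝ → ℝ} (hF₀mono : Monotone F₀) (hF₀le1 : ∀ x, F₀ x ≤ 1)
    {g : ℝ → ℝ} (hg : IsDistortion g)
    {ϱ : ℝ} (hϱ : 0 ≤ ϱ)
    (w₀ ξ : ℝ)
    {z₀ : ℝ} (hz₀ : z₀ = sSup {z : ℝ | 1 ≤ (1 + ϱ) * g (1 - cdfOf P X z)})
    {ys : ℝ} (hys : ys ∈ Set.Icc (0 : ℝ) M)
    (hysmax : ∀ y ∈ Set.Icc (0 : ℝ) M,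
      Kfun P X g F₀ ϱ w₀ ξ (min y z₀) y ≤ Kfun P X g F₀ ϱ w₀ ξ (min ys z₀) ys)
    {I : ℝ → ℝ} (hI : IsCeded I) (t : ℝ) :
    F₀ t - (P {ω | w₀ - ξ - (1 + ϱ) * distExp g P (fun ω' => I (X ω'))
        - (X ω - I (X ω)) < t}).toReal
      ≤ max (Kfun P X g F₀ ϱ w₀ ξ (min ys z₀) ys - 1) 0 := by
  have hM0 : (0:ℝ) ≤ M := le_trans hys.1 hys.2
  have h1ϱ : (0:ℝ) < 1 + ϱ := by linarith
  set G : ℝ → ℝ := fun v => g (1 - cdfOf P X v) with hG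
  have hGanti : Antitone G := aux_gS_antitone P hg X
  set κ := max (Kfun P X g F₀ ϱ w₀ ξ (min ys z₀) ys - 1) 0 with hκ
  set Ks := Kfun P X g F₀ ϱ w₀ ξ (min ys z₀) ys with hKs
  have hκ0 : 0 ≤ κ := le_max_right _ _
  have hκK : Ks - 1 ≤ κ := le_max_left _ _
  set c := w₀ - ξ - (1 + ϱ) * distExp g P (fun ω' => I (X ω')) with hc
  set s := c - t with hs
  -- rewrite the event
  have hRm : Measurable (fun ω => X ω - I (X ω)) := by
    have heq : (fun ω => X ω - I (X ω)) = (fun x => max x 0 - I (max x 0)) ∘ X := by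
      funext ω
      simp only [Function.comp_apply, max_eq_left (hXnn ω)]
    rw [heq]
    exact (aux_ceded_retained_mono hI).measurable.comp hX
  have hev : {ω | w₀ - ξ - (1 + ϱ) * distExp g P (fun ω' => I (X ω'))
      - (X ω - I (X ω)) < t} = {ω | s < X ω - I (X ω)} := by
    ext ω
    simp only [Set.mem_setOf_eq, hs, hc]
    constructor <;> intro h <;> linarith
  have hcompl : (P {ω | s < X ω - I (X ω)}).toReal
      = 1 - cdfOf P (fun ω => X ω - I (X ω)) s :=
    aux_prob_compl_le P _ hRm s
  rw [hev, hcompl]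
  -- goal : F₀ t - (1 - cdfR s) ≤ κ
  rcases lt_or_ge s 0 with hs0 | hs0
  · -- s < 0 : {R ≤ s} empty
    have hempty : {ω | X ω - I (X ω) ≤ s} = ∅ := by
      ext ω
      simp only [Set.mem_setOf_eq, Set.mem_empty_iff_false, iff_false, not_le]
      have h1 : I (X ω) ≤ X ω := aux_ceded_le_self hI (hXnn ω)
      linarith
    have : cdfOf P (fun ω => X ω - I (X ω)) s = 0 := by
      rw [cdfOf]
      simp only [hempty, measure_empty, ENNReal.toReal_zero]
    rw [this]
    have := hF₀le1 t
    linarith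
  · -- 0 ≤ s
    set Sy := {x : ℝ | x - I x ≤ s} ∩ Set.Icc 0 M with hSy
    have h0Sy : (0:ℝ) ∈ Sy := by
      constructor
      · rw [Set.mem_setOf_eq, hI.1]; linarith
      · exact ⟨le_rfl, hM0⟩
    have hSybdd : BddAbove Sy := ⟨M, fun x hx => hx.2.2⟩
    set y := sSup Sy with hy
    have hy0 : 0 ≤ y := le_csSup hSybdd h0Sy
    have hyM : y ≤ M := csSup_le ⟨0, h0Sy⟩ (fun x hx => hx.2.2)
    have hstep1 : cdfOf P (fun ω => X ω - I (X ω)) s ≤ cdfOf P X y := by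
      refine ENNReal.toReal_mono (measure_ne_top _ _) (measure_mono_ae ?_)
      filter_upwards [hMbound] with ω hω hmem
      have hXmem : X ω ∈ Sy := ⟨hmem, ⟨hXnn ω, hω⟩⟩
      exact le_csSup hSybdd hXmem
    have hIlb : ∀ x, 0 ≤ x → x < y → x - s ≤ I x := by
      intro x hx0 hxy
      obtain ⟨x', hx'mem, hx'⟩ := exists_lt_of_lt_csSup ⟨0, h0Sy⟩ hxy
      have h1 : x - I x ≤ x' - I x' := hI.2.2 hx0 hx'mem.2.1 hx'.le
      have h2 : x' - I x' ≤ s := hx'mem.1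
      linarith
    rcases le_or_gt s y with hsy | hsy
    · -- main case : 0 ≤ s ≤ y ≤ M
      have hcdf : ∀ u, 0 < u → u < y - s →
          cdfOf P (fun ω => I (X ω)) u ≤ cdfOf P X (u + s) := by
        intro u hu0 huys
        refine ENNReal.toReal_mono (measure_ne_top _ _) (measure_mono ?_)
        intro ω (hω : I (X ω) ≤ u)
        show X ω ≤ u + s
        by_contra hgt
        push_neg at hgt
        have hus0 : 0 ≤ u + s := by linarith
        rcases lt_or_ge (X ω) y with hxy | hxy
        · have := hIlb (X ω) (hXnn ω) hxy
          linarith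
        · set x' := (u + s + y) / 2 with hx'
          have hx'1 : u + s < x' := by rw [hx']; linarith
          have hx'2 : x' < y := by rw [hx']; linarith
          have hx'0 : 0 ≤ x' := by rw [hx']; linarith
          have h1 : x' - s ≤ I x' := hIlb x' hx'0 hx'2
          have h2 : I x' ≤ I (X ω) := hI.2.1 hx'0 (hXnn ω) (by linarith)
          linarith
      have hWae : ∀ᵐ ω ∂P, I (X ω) ≤ M := by
        filter_upwards [hMbound] with ω hω
        exact le_trans (aux_ceded_le_self hI (hXnn ω)) hω
      have hpi : ∫ v in s..y, G v ≤ distExp g P (fun ω => I (X ω)) :=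
        aux_distExp_ge P hg hWae hsy hcdf
      -- premium argument comparison
      set z' := min y z₀ with hz'
      have hz'y : z' ≤ y := min_le_left _ _
      have hKarg : (1 + ϱ) * (∫ v in z'..y, G v) + z'
          ≤ (1 + ϱ) * (∫ v in s..y, G v) + s := by
        rcases le_total s z' with hsz | hsz
        · have hsplit : ∫ v in s..y, G v = (∫ v in s..z', G v) + ∫ v in z'..y, G v :=
            (intervalIntegral.integral_add_adjacent_intervals
              hGanti.intervalIntegrable hGanti.intervalIntegrable).symm
          have hge : z' - s ≤ (1 + ϱ) * ∫ v in s..z', G v := by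
            refine aux_interval_ge_one hGanti hsz (fun v hv1 hv2 => ?_)
            refine aux_z0_up P hg hϱ hz₀ hXnn v ?_
            exact lt_of_lt_of_le hv2 (min_le_right _ _)
          have hexp : (1 + ϱ) * ((∫ v in s..z', G v) + ∫ v in z'..y, G v)
              = (1 + ϱ) * (∫ v in s..z', G v) + (1 + ϱ) * (∫ v in z'..y, G v) := by ring
          rw [hsplit, hexp]
          linarith
        · have hsplit : ∫ v in z'..y, G v = (∫ v in z'..s, G v) + ∫ v in s..y, G v :=
            (intervalIntegral.integral_add_adjacent_intervals
              hGanti.intervalIntegrable hGanti.intervalIntegrable).symm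
          have hle : (1 + ϱ) * ∫ v in z'..s, G v ≤ s - z' := by
            refine aux_interval_le_one hGanti hsz (fun v hv1 hv2 => ?_)
            refine aux_z0_down P hMbound hg hz₀ v ?_
            rcases le_total z₀ y with hzy | hzy
            · have : z' = z₀ := min_eq_right hzy
              rw [← this]; exact hv1
            · have : z' = y := min_eq_left hzy
              exfalso
              rw [this] at hv1
              linarith
          have hexp : (1 + ϱ) * ((∫ v in z'..s, G v) + ∫ v in s..y, G v)
              = (1 + ϱ) * (∫ v in z'..s, G v) + (1 + ϱ) * (∫ v in s..y, G v) := by ring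
          rw [hsplit, hexp]
          linarith
      have hchain : F₀ t ≤ Kfun P X g F₀ ϱ w₀ ξ z' y - cdfOf P X y := by
        have h1 : t ≤ w₀ - (1 + ϱ) * (∫ v in s..y, G v) - ξ - s := by
          rw [hs, hc]
          have := mul_le_mul_of_nonneg_left hpi (le_of_lt h1ϱ)
          linarith
        have h2 : w₀ - (1 + ϱ) * (∫ v in s..y, G v) - ξ - s
            ≤ w₀ - (1 + ϱ) * (∫ v in z'..y, G v) - ξ - z' := by linarith
        have h3 := hF₀mono (le_trans h1 h2)
        rw [Kfun]
        simp only [← hG]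
        linarith
      have hKy : Kfun P X g F₀ ϱ w₀ ξ z' y ≤ Ks := hysmax y ⟨hy0, hyM⟩
      have hF0t : F₀ t + cdfOf P X y ≤ Ks := by linarith
      have := hstep1
      have hκ' : F₀ t + cdfOf P X y - 1 ≤ κ := by linarith
      linarith
    · -- s > y : then M < s
      have hMs : M < s := by
        by_contra hle
        push_neg at hle
        have hsSy : s ∈ Sy := by
          constructor
          · rw [Set.mem_setOf_eq]
            have := aux_ceded_nonneg hI hs0
            linarith
          · exact ⟨hs0, hle⟩
        have := le_csSup hSybdd hsSy
        linarith
      set z' := min M z₀ with hz'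
      have hz'M : z' ≤ M := min_le_left _ _
      have hInt : (1 + ϱ) * (∫ v in z'..M, G v) ≤ M - z' := by
        refine aux_interval_le_one hGanti hz'M (fun v hv1 hv2 => ?_)
        refine aux_z0_down P hMbound hg hz₀ v ?_
        rcases le_total z₀ M with hzM | hzM
        · have : z' = z₀ := min_eq_right hzM
          rw [← this]; exact hv1
        · have : z' = M := min_eq_left hzM
          exfalso
          rw [this] at hv1
          linarith
      have hchain : F₀ t ≤ Kfun P X g F₀ ϱ w₀ ξ z' M - cdfOf P X M := by
        have hd0 : 0 ≤ distExp g P (fun ω' => I (X ω')) := aux_distExp_nonneg P hg _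
        have h1 : t ≤ w₀ - ξ - s := by
          rw [hs, hc]
          have : 0 ≤ (1 + ϱ) * distExp g P (fun ω' => I (X ω')) :=
            mul_nonneg (le_of_lt h1ϱ) hd0
          linarith
        have h2 : w₀ - ξ - s ≤ w₀ - (1 + ϱ) * (∫ v in z'..M, G v) - ξ - z' := by
          linarith
        have h3 := hF₀mono (le_trans h1 h2)
        rw [Kfun]
        simp only [← hG]
        linarith
      have hKy : Kfun P X g F₀ ϱ w₀ ξ z' M ≤ Ks := hysmax M ⟨hM0, le_rfl⟩
      have hcdfM : cdfOf P X M = 1 := aux_cdf_one_of_ae P hMbound le_rfl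
      have hle1 : cdfOf P (fun ω => X ω - I (X ω)) s ≤ 1 := aux_cdf_le_one P _ s
      rw [hcdfM] at hchain
      linarith
end Analytic

/-- **Theorem 3.2.** With `z₀ = sup{z : (1+ϱ)g(S_X(z)) ≥ 1}` and `y*` a
maximizer of `y ↦ K(min{y,z₀}, y)` over `[0,M]`, the contract `I* = I_{z*,y*}` with
`z* = min{y*, z₀}` is optimal for the distributionally robust problem
`sup_{I∈𝓘} inf_{Y∼F₀} ℙ(w₀ − Y − X + I(X) − π^g(I(X)) ≥ ξ)`. -/
theorem optimal_robust_reinsurance_with_background {Ω : Type*} [MeasurableSpace Ω]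
    (P : Measure Ω) [IsProbabilityMeasure P] (hatomless : Atomless P)
    (X : Ω → ℝ) (hX : Measurable X) (hXnn : ∀ ω, 0 ≤ X ω)
    (M : ℝ) (hMbound : ∀ᵐ ω ∂P, X ω ≤ M)
    (hMleast : ∀ M' : ℝ, (∀ᵐ ω ∂P, X ω ≤ M') → M ≤ M')
    (F₀ : ℝ → ℝ) (hF₀mono : Monotone F₀) (hF₀cont : Continuous F₀)
    (hF₀bot : Tendsto F₀ atBot (𝓝 0)) (hF₀top : Tendsto F₀ atTop (𝓝 1))
    (g : ℝ → ℝ) (hg : IsDistortion g)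
    (ϱ : ℝ) (hϱ : 0 ≤ ϱ)
    (w₀ ξ : ℝ)
    (z₀ : ℝ) (hz₀ : z₀ = sSup {z : ℝ | 1 ≤ (1 + ϱ) * g (1 - cdfOf P X z)})
    (ys : ℝ) (hys : ys ∈ Set.Icc (0 : ℝ) M)
    (hysmax : ∀ y ∈ Set.Icc (0 : ℝ) M,
      Kfun P X g F₀ ϱ w₀ ξ (min y z₀) y ≤ Kfun P X g F₀ ϱ w₀ ξ (min ys z₀) ys) :
    ∀ I : ℝ → ℝ, IsCeded I →
      robustVal P X g F₀ ϱ w₀ ξ I ≤ robustVal P X g F₀ ϱ w₀ ξ (Ifun (min ys z₀) ys) := by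
  intro I hI
  classical
  have hle1P : ∀ S : Set Ω, (P S).toReal ≤ 1 := by
    intro S
    have := ENNReal.toReal_mono (b := (1:ℝ≥0∞)) (by simp) (prob_le_one (μ := P) (s := S))
    simpa using this
  by_cases hfeas : ∃ Y : Ω → ℝ, Measurable Y ∧ (∀ z : ℝ, cdfOf P Y z = F₀ z)
  · -- feasible case
    obtain ⟨Y₀, hY₀m, hY₀law⟩ := hfeas
    set κ := max (Kfun P X g F₀ ϱ w₀ ξ (min ys z₀) ys - 1) 0 with hκdef
    have hκ0 : 0 ≤ κ := by rw [hκdef]; exact le_max_right _ _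
    have hzsys : min ys z₀ ≤ ys := min_le_left _ _
    have hlayer : distExp g P (fun ω' => Ifun (min ys z₀) ys (X ω'))
        = ∫ v in (min ys z₀)..ys, g (1 - cdfOf P X v) :=
      aux_distExp_layer P hg hzsys
    -- Part D : every feasible Y gives value ≥ κ for the contract I*
    have hD : ∀ Y : Ω → ℝ, Measurable Y → (∀ z, cdfOf P Y z = F₀ z) →
        κ ≤ (P {ω | ξ ≤ w₀ - Y ω - X ω + Ifun (min ys z₀) ys (X ω)
          - (1 + ϱ) * distExp g P (fun ω' => Ifun (min ys z₀) ys (X ω'))}).toReal := by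
      intro Y hYm hYlaw
      set πs := (1 + ϱ) * distExp g P (fun ω' => Ifun (min ys z₀) ys (X ω')) with hπs
      set b := (P {ω | ξ ≤ w₀ - Y ω - X ω + Ifun (min ys z₀) ys (X ω) - πs}).toReal with hb
      have hb0 : 0 ≤ b := ENNReal.toReal_nonneg
      set tstar := w₀ - ξ - πs - min ys z₀ with htstar
      have hsub : {ω | Y ω ≤ tstar}
          ⊆ {ω | ξ ≤ w₀ - Y ω - X ω + Ifun (min ys z₀) ys (X ω) - πs}
            ∪ {ω | ys < X ω} := by
        intro ω (hω : Y ω ≤ tstar)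
        rcases le_or_gt (X ω) ys with hle | hlt
        · left
          have hR : X ω - Ifun (min ys z₀) ys (X ω) ≤ min ys z₀ := by
            have hrfl : Ifun (min ys z₀) ys (X ω) = if X ω ≤ min ys z₀ then 0
                else if X ω ≤ ys then X ω - min ys z₀ else ys - min ys z₀ := rfl
            rw [hrfl]
            by_cases h1 : X ω ≤ min ys z₀
            · rw [if_pos h1]; linarith
            · rw [if_neg h1, if_pos hle]; linarith
          show ξ ≤ w₀ - Y ω - X ω + Ifun (min ys z₀) ys (X ω) - πs
          rw [htstar] at hω
          linarith
        · right; exact hlt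
      have hPle : P {ω | Y ω ≤ tstar}
          ≤ P {ω | ξ ≤ w₀ - Y ω - X ω + Ifun (min ys z₀) ys (X ω) - πs}
            + P {ω | ys < X ω} :=
        le_trans (measure_mono hsub) (measure_union_le _ _)
      have htr : F₀ tstar ≤ b + (1 - cdfOf P X ys) := by
        have h1' : (P {ω | Y ω ≤ tstar}).toReal = F₀ tstar := hYlaw tstar
        have h2 := ENNReal.toReal_mono
          (ENNReal.add_ne_top.2 ⟨measure_ne_top _ _, measure_ne_top _ _⟩) hPle
        rw [ENNReal.toReal_add (measure_ne_top _ _) (measure_ne_top _ _)] at h2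
        rw [aux_prob_compl_le P X hX ys] at h2
        rw [← hb, h1'] at h2
        exact h2
      have hKsb : Kfun P X g F₀ ϱ w₀ ξ (min ys z₀) ys - 1 ≤ b := by
        have harg : w₀ - (1 + ϱ) * (∫ v in (min ys z₀)..ys, g (1 - cdfOf P X v))
            - ξ - min ys z₀ = tstar := by
          rw [htstar, hπs, hlayer]
          ring
        rw [Kfun, harg]
        have hcy := aux_cdf_le_one P X ys
        have hcy0 := aux_cdf_nonneg P X ys
        linarith
      rw [hκdef]
      exact max_le (by linarith) hb0
    -- Part C+E : the value of I can be pushed below κ + ε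
    have hRm : Measurable (fun ω => X ω - I (X ω)) := by
      have heq : (fun ω => X ω - I (X ω)) = (fun x => max x 0 - I (max x 0)) ∘ X := by
        funext ω; simp only [Function.comp_apply, max_eq_left (hXnn ω)]
      rw [heq]; exact (aux_ceded_retained_mono hI).measurable.comp hX
    set Zf : Ω → ℝ := fun ω => w₀ - ξ - (1 + ϱ) * distExp g P (fun ω' => I (X ω'))
        - (X ω - I (X ω)) with hZf
    have hZm : Measurable Zf := by
      rw [hZf]
      exact measurable_const.sub hRm
    have hF₀le1 : ∀ x, F₀ x ≤ 1 := aux_F0_le_one hF₀mono hF₀top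
    have hC : ∀ t, F₀ t ≤ κ + (P {ω | Zf ω < t}).toReal := by
      intro t
      have h := aux_analytic P hX hXnn hMbound hF₀mono hF₀le1 hg hϱ w₀ ξ hz₀ hys hysmax hI t
      rw [← hκdef] at h
      have hset : {ω | Zf ω < t} = {ω | w₀ - ξ - (1 + ϱ) * distExp g P (fun ω' => I (X ω'))
          - (X ω - I (X ω)) < t} := by
        simp only [hZf]
      rw [hset]
      linarith
    have hEle : ∀ ε : ℝ, 0 < ε →
        ∃ p ∈ {p : ℝ | ∃ Y : Ω → ℝ, Measurable Y ∧ (∀ z : ℝ, cdfOf P Y z = F₀ z) ∧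
          p = (P {ω | ξ ≤ w₀ - Y ω - X ω + I (X ω)
            - (1 + ϱ) * distExp g P (fun ω' => I (X ω'))}).toReal}, p ≤ κ + ε := by
      intro ε hε
      rcases lt_or_ge (κ + ε) 1 with h1 | h1
      · obtain ⟨Y', hY'm, hY'law, hY'bd⟩ :=
          aux_construct P hF₀mono hF₀cont hF₀bot hF₀top hZm hY₀m hY₀law hκ0 hε h1 hC
        refine ⟨_, ⟨Y', hY'm, hY'law, rfl⟩, ?_⟩
        have hset : {ω | ξ ≤ w₀ - Y' ω - X ω + I (X ω)
            - (1 + ϱ) * distExp g P (fun ω' => I (X ω'))} = {ω | Y' ω ≤ Zf ω} := by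
          ext ω
          simp only [Set.mem_setOf_eq, hZf]
          constructor <;> intro h <;> linarith
        rw [hset]
        exact hY'bd
      · refine ⟨_, ⟨Y₀, hY₀m, hY₀law, rfl⟩, ?_⟩
        exact le_trans (hle1P _) h1
    -- assemble
    have h1 : robustVal P X g F₀ ϱ w₀ ξ I ≤ κ := by
      rw [robustVal]
      set A := {p : ℝ | ∃ Y : Ω → ℝ, Measurable Y ∧
          (∀ z : ℝ, cdfOf P Y z = F₀ z) ∧
          p = (P {ω | ξ ≤ w₀ - Y ω - X ω + I (X ω)
            - (1 + ϱ) * distExp g P (fun ω' => I (X ω'))}).toReal} with hA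
      have hbdd : BddBelow A := by
        refine ⟨0, ?_⟩
        rintro p ⟨Y, -, -, rfl⟩
        exact ENNReal.toReal_nonneg
      by_contra hgt
      push_neg at hgt
      obtain ⟨p, hpA, hple⟩ := hEle ((sInf A - κ)/2) (by linarith)
      have := csInf_le hbdd hpA
      linarith
    have h2 : κ ≤ robustVal P X g F₀ ϱ w₀ ξ (Ifun (min ys z₀) ys) := by
      rw [robustVal]
      refine le_csInf ⟨_, Y₀, hY₀m, hY₀law, rfl⟩ ?_
      rintro b ⟨Y, hm, hl, rfl⟩
      exact hD Y hm hl
    exact le_trans h1 h2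
  · -- no feasible Y at all : both values are sInf ∅ = 0
    have h0 : ∀ J : ℝ → ℝ, robustVal P X g F₀ ϱ w₀ ξ J = 0 := by
      intro J
      rw [robustVal]
      have hsetempty : {p : ℝ | ∃ Y : Ω → ℝ, Measurable Y ∧
          (∀ z : ℝ, cdfOf P Y z = F₀ z) ∧
          p = (P {ω | ξ ≤ w₀ - Y ω - X ω + J (X ω)
            - (1 + ϱ) * distExp g P (fun ω' => J (X ω'))}).toReal} = ∅ := by
        rw [Set.eq_empty_iff_forall_notMem]
        rintro p ⟨Y, hm, hl, -⟩
        exact hfeas ⟨Y, hm, hl⟩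
      rw [hsetempty]
      exact Real.sInf_empty
    rw [h0 I, h0 (Ifun (min ys z₀) ys)]
end

section
/- Let X be a nonnegative random variable with essential supremum M < ∞ whose cdf F_X is continuous and strictly increasing on [0, M], let g be a continuous strictly increasing distortion function, ϱ ≥ 0, and let h : [0, M] → ℝ be continuous and increasing. Define z₀ = sup{ z ∈ ℝ : (1+ϱ) g(S_X(z)) ≥ 1 } and L(a,b) = h(b) + a + (1+ϱ)∫_a^b g(S_X(t)) dt for 0 ≤ a ≤ b ≤ M. Assume h(M) + z₀ + π^g((X − z₀)₊) > w₀ − ξ ≥ h(0). Consider the problem sup_{I∈𝓘} ℙ( w₀ − h(X) − X + I(X) − π^g(I(X)) ≥ ξ ). Then: (i) if h(z₀) + z₀ ≥ w₀ − ξ, the contract I ≡ 0 (no reinsurance) is optimal; (ii) if h(z₀) + z₀ < w₀ − ξ, there exists b* ∈ (z₀, M) with L(z₀, b*) = w₀ − ξ, and the stop-loss contract with upper limit I_{z₀,b*} is optimal, i.e., for every I ∈ 𝓘, ℙ( w₀ − h(X) − X + I(X) − π^g(I(X)) ≥ ξ ) ≤ ℙ( w₀ − h(X) − X + I_{z₀,b*}(X)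 − π^g(I_{z₀,b*}(X)) ≥ ξ ) = F_X(b*). -/
open MeasureTheory

/-- The insurer's goal-reaching probability under contract `I` with a comonotonic background
risk `h(X)`: `ℙ(w₀ − h(X) − X + I(X) − π^g(I(X)) ≥ ξ)`. -/
noncomputable def objVal {Ω : Type*} [MeasurableSpace Ω] (P : Measure Ω) (X : Ω → ℝ)
    (g h : ℝ → ℝ) (ϱ w₀ ξ : ℝ) (I : ℝ → ℝ) : ℝ :=
  (P {ω | ξ ≤ w₀ - h (X ω) - X ω + I (X ω)
      - (1 + ϱ) * distExp g P (fun ω' => I (X ω'))}).toReal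

/-- The function `L(a,b) = h(b) + a + (1+ϱ)∫_a^b g(S_X(t)) dt`. -/
noncomputable def Lfun {Ω : Type*} [MeasurableSpace Ω] (P : Measure Ω) (X : Ω → ℝ)
    (g h : ℝ → ℝ) (ϱ : ℝ) (a b : ℝ) : ℝ :=
  h b + a + (1 + ϱ) * ∫ t in a..b, g (1 - cdfOf P X t)

set_option linter.unusedSectionVars false
set_option maxHeartbeats 1000000
open Set

section helpers
variable {Ω : Type*} [MeasurableSpace Ω] (P : Measure Ω) [IsProbabilityMeasure P]

lemma cdf_mono (Z : Ω → ℝ) : Monotone (cdfOf P Z) := by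
  intro a b hab
  unfold cdfOf
  exact ENNReal.toReal_mono (measure_ne_top _ _)
    (measure_mono (fun ω hω => le_trans hω hab))

lemma cdf_nonneg (Z : Ω → ℝ) (z : ℝ) : 0 ≤ cdfOf P Z z := ENNReal.toReal_nonneg

lemma cdf_le_one (Z : Ω → ℝ) (z : ℝ) : cdfOf P Z z ≤ 1 := by
  unfold cdfOf
  rw [show (1:ℝ) = (1:ENNReal).toReal by simp]
  exact ENNReal.toReal_mono (by simp) prob_le_one

lemma cdf_eq_one (Z : Ω → ℝ) (z : ℝ) (hz : ∀ᵐ ω ∂P, Z ω ≤ z) : cdfOf P Z z = 1 := by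
  unfold cdfOf
  have : P {ω | Z ω ≤ z} = 1 := by
    refine le_antisymm prob_le_one ?_
    calc (1:ENNReal) = P univ := (measure_univ).symm
    _ ≤ P {ω | Z ω ≤ z} := measure_mono_ae (by filter_upwards [hz] with ω hω _ using hω)
  simp [this]

/-- `g ∘ (1 - F_Z)` is antitone. -/
lemma G_antitone (g : ℝ → ℝ) (hg : IsDistortion g) (Z : Ω → ℝ) :
    Antitone (fun z => g (1 - cdfOf P Z z)) := by
  intro a b hab
  exact hg.1 (by constructor <;> [linarith [cdf_le_one P Z b]; linarith [cdf_nonneg P Z b]])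
    (by constructor <;> [linarith [cdf_le_one P Z a]; linarith [cdf_nonneg P Z a]])
    (by linarith [cdf_mono P Z hab])

lemma G_mem (g : ℝ → ℝ) (hg : IsDistortion g) (Z : Ω → ℝ) (z : ℝ) :
    g (1 - cdfOf P Z z) ∈ Set.Icc (0:ℝ) 1 :=
  hg.2.1 _ (by constructor <;> [linarith [cdf_le_one P Z z]; linarith [cdf_nonneg P Z z]])

lemma G_integrableOn_Ioc (g : ℝ → ℝ) (hg : IsDistortion g) (Z : Ω → ℝ) (a b : ℝ) :
    IntegrableOn (fun z => g (1 - cdfOf P Z z)) (Set.Ioc a b) := by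
  refine Integrable.mono' (integrable_const 1) ((G_antitone P g hg Z).measurable).aestronglyMeasurable ?_
  filter_upwards with z
  rw [Real.norm_eq_abs, abs_le]
  exact ⟨by linarith [(G_mem P g hg Z z).1], (G_mem P g hg Z z).2⟩

lemma G_integrableOn_Ioi (g : ℝ → ℝ) (hg : IsDistortion g) (Z : Ω → ℝ) (M : ℝ)
    (hM : 0 ≤ M) (hZ : ∀ᵐ ω ∂P, Z ω ≤ M) :
    IntegrableOn (fun z => g (1 - cdfOf P Z z)) (Set.Ioi 0) := by
  rw [← Set.Ioc_union_Ioi_eq_Ioi hM]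
  refine IntegrableOn.union (G_integrableOn_Ioc P g hg Z 0 M) ?_
  have : EqOn (fun z => g (1 - cdfOf P Z z)) (fun _ => (0:ℝ)) (Set.Ioi M) := by
    intro z hz
    have : cdfOf P Z z = 1 := cdf_eq_one P Z z (by filter_upwards [hZ] with ω hω using le_trans hω (le_of_lt hz))
    simp [this, hg.2.2.1]
  exact (integrableOn_congr_fun this measurableSet_Ioi).mpr (integrableOn_zero)

/-- distExp over `Ioi 0` equals the integral over `Ioc 0 M`. -/
lemma distExp_eq (g : ℝ → ℝ) (hg : IsDistortion g) (Z : Ω → ℝ) (M : ℝ)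
    (hM : 0 ≤ M) (hZ : ∀ᵐ ω ∂P, Z ω ≤ M) :
    distExp g P Z = ∫ z in Set.Ioc 0 M, g (1 - cdfOf P Z z) := by
  unfold distExp
  rw [← Set.Ioc_union_Ioi_eq_Ioi hM,
    setIntegral_union (Set.Ioc_disjoint_Ioi le_rfl) measurableSet_Ioi
      (G_integrableOn_Ioc P g hg Z 0 M) ?_]
  · have : EqOn (fun z => g (1 - cdfOf P Z z)) (fun _ => (0:ℝ)) (Set.Ioi M) := by
      intro z hz
      have : cdfOf P Z z = 1 := cdf_eq_one P Z z (by filter_upwards [hZ] with ω hω using le_trans hω (le_of_lt hz))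
      simp [this, hg.2.2.1]
    rw [setIntegral_congr_fun measurableSet_Ioi this]
    simp
  · have : EqOn (fun z => g (1 - cdfOf P Z z)) (fun _ => (0:ℝ)) (Set.Ioi M) := by
      intro z hz
      have : cdfOf P Z z = 1 := cdf_eq_one P Z z (by filter_upwards [hZ] with ω hω using le_trans hω (le_of_lt hz))
      simp [this, hg.2.2.1]
    exact (integrableOn_congr_fun this measurableSet_Ioi).mpr (integrableOn_zero)

end helpers

set_option linter.unusedSectionVars false

section ceded

variable {I : ℝ → ℝ} (hI : IsCeded I)
include hI

lemma ceded_mono_diff {x y : ℝ} (hx : 0 ≤ x) (hxy : x ≤ y) : I y - I x ≤ y - x := by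
  have := hI.2.2 (Set.mem_Ici.mpr hx) (Set.mem_Ici.mpr (le_trans hx hxy)) hxy
  simp only at this; linarith

lemma ceded_mono {x y : ℝ} (hx : 0 ≤ x) (hxy : x ≤ y) : I x ≤ I y :=
  hI.2.1 (Set.mem_Ici.mpr hx) (Set.mem_Ici.mpr (le_trans hx hxy)) hxy

lemma ceded_nonneg {x : ℝ} (hx : 0 ≤ x) : 0 ≤ I x := by
  have := ceded_mono hI le_rfl hx; rw [hI.1] at this; linarith

lemma ceded_le_self {x : ℝ} (hx : 0 ≤ x) : I x ≤ x := by
  have := ceded_mono_diff hI le_rfl hx; rw [hI.1] at this; linarith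

end ceded

/-- Additivity of the layer integral. -/
lemma Ioc_integral_add (f : ℝ → ℝ) (hf : ∀ a b : ℝ, IntegrableOn f (Set.Ioc a b))
    (a b c : ℝ) (hab : a ≤ b) (hbc : b ≤ c) :
    ∫ z in Set.Ioc a c, f z = (∫ z in Set.Ioc a b, f z) + ∫ z in Set.Ioc b c, f z := by
  rw [← Set.Ioc_union_Ioc_eq_Ioc hab hbc,
    setIntegral_union ((Set.Ioc_disjoint_Ioi le_rfl).mono_right Set.Ioc_subset_Ioi_self)
      measurableSet_Ioc (hf a b) (hf b c)]


section key
variable {Ω : Type*} [MeasurableSpace Ω] (P : Measure Ω) [IsProbabilityMeasure P]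
variable (X : Ω → ℝ) (hXnn : ∀ ω, 0 ≤ X ω)
variable (g : ℝ → ℝ) (hg : IsDistortion g)
variable {I : ℝ → ℝ} (hI : IsCeded I)
include hXnn hg hI

/-- Key comparison: if `z < I t` with `t ≥ 0`, then `F_{I(X)}(z) ≤ F_X(t)`. -/
lemma cdf_comp_le (t z : ℝ) (ht : 0 ≤ t) (hz : z < I t) :
    cdfOf P (fun ω => I (X ω)) z ≤ cdfOf P X t := by
  unfold cdfOf
  refine ENNReal.toReal_mono (measure_ne_top _ _) (measure_mono ?_)
  intro ω hω
  simp only [Set.mem_setOf_eq] at hω ⊢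
  by_contra hc
  push_neg at hc
  have : I t ≤ I (X ω) := ceded_mono hI ht (le_of_lt hc)
  linarith

/-- hence `g(1 - F_{I(X)}(z)) ≥ g(1 - F_X(t))`. -/
lemma G_comp_ge (t z : ℝ) (ht : 0 ≤ t) (hz : z < I t) :
    g (1 - cdfOf P X t) ≤ g (1 - cdfOf P (fun ω => I (X ω)) z) := by
  refine hg.1 ?_ ?_ ?_
  · constructor <;> [linarith [cdf_le_one P X t]; linarith [cdf_nonneg P X t]]
  · constructor <;>
      [linarith [cdf_le_one P (fun ω => I (X ω)) z]; linarith [cdf_nonneg P (fun ω => I (X ω)) z]]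
  · linarith [cdf_comp_le P X hXnn g hg hI t z ht hz]

/-- For `c ≤ z₀`, the premium layer below `I c` is worth at least `I c`. -/
lemma below_z0 (ϱ z₀ c : ℝ) (hϱ : 0 ≤ ϱ) (hc0 : 0 ≤ c) (hcz : c ≤ z₀)
    (hlow : ∀ t, 0 ≤ t → t < z₀ → 1 ≤ (1 + ϱ) * g (1 - cdfOf P X t)) :
    I c ≤ (1 + ϱ) * ∫ z in Set.Ioc 0 (I c), g (1 - cdfOf P (fun ω => I (X ω)) z) := by
  have h1ϱ : (0:ℝ) < 1 + ϱ := by linarith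
  rcases eq_or_lt_of_le (ceded_nonneg hI hc0) with h0 | h0
  · rw [← h0]; simp
  have hkey : ∀ z ∈ Set.Ioo (0:ℝ) (I c), 1/(1+ϱ) ≤ g (1 - cdfOf P (fun ω => I (X ω)) z) := by
    intro z hz
    obtain ⟨hz0, hzc⟩ := hz
    have hIcc : I c ≤ c := ceded_le_self hI hc0
    have hc' : 0 < c := lt_of_lt_of_le h0 hIcc
    have htpos : 0 < c - (I c - z)/2 := by linarith
    have htc : c - (I c - z)/2 < c := by linarith
    have hlip := ceded_mono_diff hI (le_of_lt htpos) (le_of_lt htc)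
    have hIt : z < I (c - (I c - z)/2) := by linarith
    have h2 := G_comp_ge P X hXnn g hg hI (c - (I c - z)/2) z (le_of_lt htpos) hIt
    have h3 := hlow _ (le_of_lt htpos) (lt_of_lt_of_le htc hcz)
    rw [div_le_iff₀ h1ϱ]
    nlinarith
  have hInt : IntegrableOn (fun z => g (1 - cdfOf P (fun ω => I (X ω)) z)) (Set.Ioo 0 (I c)) :=
    (G_integrableOn_Ioc P g hg (fun ω => I (X ω)) 0 (I c)).mono_set Set.Ioo_subset_Ioc_self
  have hle := setIntegral_mono_on
      (integrableOn_const (by rw [Real.volume_Ioo]; exact ENNReal.ofReal_ne_top))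
      hInt measurableSet_Ioo hkey
  rw [setIntegral_const, smul_eq_mul, Real.volume_real_Ioo_of_le (by linarith : (0:ℝ) ≤ I c)] at hle
  rw [integral_Ioc_eq_integral_Ioo]
  calc I c = (1+ϱ) * ((I c - 0) * (1/(1+ϱ))) := by field_simp; ring
  _ ≤ (1+ϱ) * ∫ z in Set.Ioo 0 (I c), g (1 - cdfOf P (fun ω => I (X ω)) z) :=
      mul_le_mul_of_nonneg_left hle (le_of_lt h1ϱ)

/-- distExp dominates the integral over any initial layer. -/
lemma distExp_ge_layer (M c : ℝ) (hM : 0 ≤ M) (hZ : ∀ᵐ ω ∂P, I (X ω) ≤ M) :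
    ∫ z in Set.Ioc 0 c, g (1 - cdfOf P (fun ω => I (X ω)) z) ≤
      distExp g P (fun ω => I (X ω)) := by
  unfold distExp
  refine setIntegral_mono_set (G_integrableOn_Ioi P g hg (fun ω => I (X ω)) M hM hZ) ?_ ?_
  · filter_upwards with z using (G_mem P g hg (fun ω => I (X ω)) z).1
  · filter_upwards with z hz using Set.Ioc_subset_Ioi_self hz

/-- Per-interval increment inequality. -/
lemma star_step (ϱ z₀ : ℝ) (hϱ : 0 ≤ ϱ) (h0 : 0 ≤ z₀)
    (hup : ∀ t, z₀ < t → (1 + ϱ) * g (1 - cdfOf P X t) ≤ 1)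
    (s u : ℝ) (hzs : z₀ ≤ s) (hsu : s ≤ u) (hzu : z₀ < u) :
    (u - s) * ((1+ϱ) * (g (1 - cdfOf P X u) - g (1 - cdfOf P X s)))
      ≤ (u - s) - (I u - I s)
        + (1+ϱ) * (∫ z in Set.Ioc (I s) (I u), g (1 - cdfOf P (fun ω => I (X ω)) z))
        - (1+ϱ) * (∫ t in Set.Ioc s u, g (1 - cdfOf P X t)) := by
  have h1ϱ : (0:ℝ) < 1 + ϱ := by linarith
  have h0s : (0:ℝ) ≤ s := le_trans h0 hzs
  have h0u : (0:ℝ) ≤ u := le_trans h0s hsu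
  have hIsu : I s ≤ I u := ceded_mono hI h0s hsu
  have hlip : I u - I s ≤ u - s := ceded_mono_diff hI h0s hsu
  -- (a) lower bound for the GI layer
  have ha : (I u - I s) * g (1 - cdfOf P X u) ≤
      ∫ z in Set.Ioc (I s) (I u), g (1 - cdfOf P (fun ω => I (X ω)) z) := by
    have hkey : ∀ z ∈ Set.Ioo (I s) (I u),
        g (1 - cdfOf P X u) ≤ g (1 - cdfOf P (fun ω => I (X ω)) z) := by
      intro z hz
      exact G_comp_ge P X hXnn g hg hI u z h0u hz.2
    have hInt : IntegrableOn (fun z => g (1 - cdfOf P (fun ω => I (X ω)) z))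
        (Set.Ioo (I s) (I u)) :=
      (G_integrableOn_Ioc P g hg (fun ω => I (X ω)) (I s) (I u)).mono_set
        Set.Ioo_subset_Ioc_self
    have hle := setIntegral_mono_on
        (integrableOn_const (by rw [Real.volume_Ioo]; exact ENNReal.ofReal_ne_top))
        hInt measurableSet_Ioo hkey
    rw [setIntegral_const, smul_eq_mul, Real.volume_real_Ioo_of_le (by linarith : I s ≤ I u)] at hle
    rw [integral_Ioc_eq_integral_Ioo]
    exact hle
  -- (b) upper bound for the G layer
  have hb : (∫ t in Set.Ioc s u, g (1 - cdfOf P X t)) ≤ (u - s) * g (1 - cdfOf P X s) := by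
    have hkey : ∀ z ∈ Set.Ioo s u, g (1 - cdfOf P X z) ≤ g (1 - cdfOf P X s) := by
      intro z hz
      exact G_antitone P g hg X (le_of_lt hz.1)
    have hInt : IntegrableOn (fun z => g (1 - cdfOf P X z)) (Set.Ioo s u) :=
      (G_integrableOn_Ioc P g hg X s u).mono_set Set.Ioo_subset_Ioc_self
    have hle := setIntegral_mono_on hInt
        (integrableOn_const (by rw [Real.volume_Ioo]; exact ENNReal.ofReal_ne_top))
        measurableSet_Ioo hkey
    rw [setIntegral_const, smul_eq_mul, Real.volume_real_Ioo_of_le (by linarith : s ≤ u)] at hle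
    rw [integral_Ioc_eq_integral_Ioo]
    exact hle
  have hA : (1+ϱ) * g (1 - cdfOf P X u) ≤ 1 := hup u hzu
  have hGs : g (1 - cdfOf P X s) ≤ 1 := (G_mem P g hg X s).2
  have hGu : 0 ≤ g (1 - cdfOf P X u) := (G_mem P g hg X u).1
  nlinarith [mul_nonneg (by linarith : (0:ℝ) ≤ (u - s) - (I u - I s))
      (by linarith : (0:ℝ) ≤ 1 - (1+ϱ) * g (1 - cdfOf P X u)),
    mul_le_mul_of_nonneg_left ha (le_of_lt h1ϱ),
    mul_le_mul_of_nonneg_left hb (le_of_lt h1ϱ)]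

/-- The key "marginal pricing" inequality (★). -/
lemma star (ϱ z₀ b : ℝ) (hϱ : 0 ≤ ϱ) (h0 : 0 ≤ z₀) (hzb : z₀ ≤ b)
    (hup : ∀ t, z₀ < t → (1 + ϱ) * g (1 - cdfOf P X t) ≤ 1) :
    (1+ϱ) * (∫ t in Set.Ioc z₀ b, g (1 - cdfOf P X t)) ≤
      (b - z₀) - (I b - I z₀)
        + (1+ϱ) * ∫ z in Set.Ioc (I z₀) (I b), g (1 - cdfOf P (fun ω => I (X ω)) z) := by
  have h1ϱ : (0:ℝ) < 1 + ϱ := by linarith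
  rcases eq_or_lt_of_le hzb with rfl | hlt
  · simp
  set GI := fun z => g (1 - cdfOf P (fun ω => I (X ω)) z) with hGI
  set G := fun z => g (1 - cdfOf P X z) with hG
  -- the quantity we must show is nonnegative
  set A : ℝ := (b - z₀) - (I b - I z₀) + (1+ϱ) * (∫ z in Set.Ioc (I z₀) (I b), GI z)
      - (1+ϱ) * (∫ t in Set.Ioc z₀ b, G t) with hA
  have key : ∀ n : ℕ, -((1+ϱ) * (b - z₀) / (n+1)) ≤ A := by
    intro n
    set N : ℕ := n + 1 with hN
    have hNpos : (0:ℝ) < (N:ℝ) := by exact_mod_cast Nat.succ_pos n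
    set δ : ℝ := (b - z₀) / N with hδ
    have hδpos : 0 < δ := div_pos (by linarith) hNpos
    set t : ℕ → ℝ := fun i => z₀ + i * δ with ht
    have htmono : ∀ i j : ℕ, i ≤ j → t i ≤ t j := by
      intro i j hij
      simp only [ht]
      have : (i:ℝ) ≤ j := Nat.cast_le.mpr hij
      nlinarith
    have ht0 : t 0 = z₀ := by simp [ht]
    have htN : t N = b := by
      simp only [ht, hδ]
      field_simp
      ring
    have htz : ∀ i : ℕ, z₀ ≤ t i := by
      intro i; rw [← ht0]; exact htmono 0 i (Nat.zero_le i)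
    have htb : ∀ i : ℕ, i ≤ N → t i ≤ b := by
      intro i hi; rw [← htN]; exact htmono i N hi
    have htz' : ∀ i : ℕ, z₀ < t (i + 1) := by
      intro i
      simp only [ht]
      have : (0:ℝ) < ((i:ℝ)+1) * δ := by positivity
      push_cast
      linarith
    set f : ℕ → ℝ := fun i => (t i - I (t i))
        + (1+ϱ) * (∫ z in Set.Ioc (I z₀) (I (t i)), GI z)
        - (1+ϱ) * (∫ x in Set.Ioc z₀ (t i), G x) with hf
    set e : ℕ → ℝ := fun i => (1+ϱ) * G (t i) with he
    have hstep : ∀ i ∈ Finset.range N, δ * (e (i+1) - e i) ≤ f (i+1) - f i := by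
      intro i _
      have h0ti : 0 ≤ t i := le_trans h0 (htz i)
      have hIti : I (t i) ≤ I (t (i+1)) := ceded_mono hI h0ti (htmono i (i+1) (by omega))
      have hIz : I z₀ ≤ I (t i) := ceded_mono hI h0 (htz i)
      have hsplit1 : (∫ z in Set.Ioc (I z₀) (I (t (i+1))), GI z)
          = (∫ z in Set.Ioc (I z₀) (I (t i)), GI z) + ∫ z in Set.Ioc (I (t i)) (I (t (i+1))), GI z :=
        Ioc_integral_add (fun z => GI z)
          (fun a b => G_integrableOn_Ioc P g hg (fun ω => I (X ω)) a b) _ _ _ hIz hIti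
      have hsplit2 : (∫ x in Set.Ioc z₀ (t (i+1)), G x)
          = (∫ x in Set.Ioc z₀ (t i), G x) + ∫ x in Set.Ioc (t i) (t (i+1)), G x :=
        Ioc_integral_add (fun z => G z) (fun a b => G_integrableOn_Ioc P g hg X a b)
          _ _ _ (htz i) (htmono i (i+1) (by omega))
      have hss := star_step P X hXnn g hg hI ϱ z₀ hϱ h0 hup (t i) (t (i+1)) (htz i)
        (htmono i (i+1) (by omega)) (htz' i)
      have hdiff : t (i+1) - t i = δ := by
        simp only [ht]; push_cast; ring
      rw [hdiff] at hss
      simp only [hf, he]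
      rw [hsplit1, hsplit2]
      simp only [hG, hGI] at hss ⊢
      linarith
    have hsum := Finset.sum_le_sum hstep
    rw [Finset.sum_range_sub f N] at hsum
    rw [← Finset.mul_sum, Finset.sum_range_sub e N] at hsum
    have hf0 : f 0 = z₀ - I z₀ := by
      simp [hf, ht0]
    have hfN : f N = (b - I b)
        + (1+ϱ) * (∫ z in Set.Ioc (I z₀) (I b), GI z)
        - (1+ϱ) * (∫ x in Set.Ioc z₀ b, G x) := by
      simp only [hf, htN]
    have heN : e N - e 0 = (1+ϱ) * (G b - G z₀) := by
      simp only [he, htN, ht0]; ring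
    have hGb : 0 ≤ G b := (G_mem P g hg X b).1
    have hGz : G z₀ ≤ 1 := (G_mem P g hg X z₀).2
    have : δ * ((1+ϱ) * (G b - G z₀)) ≤ A := by
      rw [← heN]
      rw [hf0, hfN] at hsum
      simp only [hA]
      linarith
    have hb1 : -((1+ϱ) * δ) ≤ δ * ((1+ϱ) * (G b - G z₀)) := by
      nlinarith [mul_le_mul_of_nonneg_left (show (-1:ℝ) ≤ G b - G z₀ by linarith)
        (show (0:ℝ) ≤ δ * (1+ϱ) by positivity)]
    have hδeq : (1+ϱ) * (b - z₀) / ((n:ℝ)+1) = (1+ϱ) * δ := by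
      rw [hδ, hN]; push_cast; ring
    rw [hδeq]
    linarith
  by_contra hcon
  push_neg at hcon
  have hApos : 0 < -A := by linarith
  obtain ⟨n, hn⟩ := exists_nat_gt ((1+ϱ) * (b - z₀) / (-A))
  have hn1 : (1+ϱ) * (b - z₀) / (-A) < (n:ℝ) + 1 := by linarith [hn]
  have h2 : (1+ϱ) * (b - z₀) < (-A) * ((n:ℝ)+1) := by
    rw [div_lt_iff₀ hApos] at hn1
    linarith
  have h3 : (1+ϱ) * (b - z₀) / ((n:ℝ)+1) < -A := by
    rw [div_lt_iff₀ (by positivity : (0:ℝ) < (n:ℝ)+1)]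
    linarith
  have := key n
  push_cast at this
  linarith
end key




/-- **Theorem C.1.** Optimal reinsurance with a comonotonic background risk
`Y = h(X)`. With `z₀ = sup{z : (1+ϱ)g(S_X(z)) ≥ 1}`, under the assumption
`h(M) + z₀ + π^g((X−z₀)₊) > w₀ − ξ ≥ h(0)`: (i) if `h(z₀) + z₀ ≥ w₀ − ξ` then no reinsurance
(`I ≡ 0`) is optimal; (ii) if `h(z₀) + z₀ < w₀ − ξ` then there is `b* ∈ (z₀, M)` with
`L(z₀,b*) = w₀ − ξ` and the stop-loss contract with upper limit `I_{z₀,b*}` is optimal, with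
optimal value `F_X(b*)`. -/
theorem optimal_reinsurance_comonotonic_background {Ω : Type*} [MeasurableSpace Ω]
    (P : Measure Ω) [IsProbabilityMeasure P]
    (X : Ω → ℝ) (hX : Measurable X) (hXnn : ∀ ω, 0 ≤ X ω)
    (M : ℝ) (hMbound : ∀ᵐ ω ∂P, X ω ≤ M)
    (hMleast : ∀ M' : ℝ, (∀ᵐ ω ∂P, X ω ≤ M') → M ≤ M')
    (hFXcont : Continuous (cdfOf P X))
    (hFXstrict : StrictMonoOn (cdfOf P X) (Set.Icc 0 M))
    (g : ℝ → ℝ) (hg : IsDistortion g)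
    (hgcont : ContinuousOn g (Set.Icc 0 1)) (hgstrict : StrictMonoOn g (Set.Icc 0 1))
    (ϱ : ℝ) (hϱ : 0 ≤ ϱ)
    (h : ℝ → ℝ) (hhcont : ContinuousOn h (Set.Icc 0 M)) (hhmono : MonotoneOn h (Set.Icc 0 M))
    (w₀ ξ : ℝ)
    (z₀ : ℝ) (hz₀ : z₀ = sSup {z : ℝ | 1 ≤ (1 + ϱ) * g (1 - cdfOf P X z)})
    (hass1 : w₀ - ξ < h M + z₀ + (1 + ϱ) * distExp g P (fun ω => max (X ω - z₀) 0))
    (hass2 : h 0 ≤ w₀ - ξ) :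
    (h z₀ + z₀ ≥ w₀ - ξ →
      ∀ I : ℝ → ℝ, IsCeded I →
        objVal P X g h ϱ w₀ ξ I ≤ objVal P X g h ϱ w₀ ξ (fun _ => 0)) ∧
    (h z₀ + z₀ < w₀ - ξ →
      ∃ bs ∈ Set.Ioo z₀ M, Lfun P X g h ϱ z₀ bs = w₀ - ξ ∧
        (∀ I : ℝ → ℝ, IsCeded I →
          objVal P X g h ϱ w₀ ξ I ≤ objVal P X g h ϱ w₀ ξ (Ifun z₀ bs)) ∧
        objVal P X g h ϱ w₀ ξ (Ifun z₀ bs) = cdfOf P X bs) := by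
  have h1ϱ : (0:ℝ) < 1 + ϱ := by linarith
  -- basic facts about M
  have hae : (ae P).NeBot := ae_neBot.mpr (IsProbabilityMeasure.ne_zero P)
  obtain ⟨ω₀, hω₀⟩ := hMbound.exists
  have hM0 : 0 ≤ M := le_trans (hXnn ω₀) hω₀
  have hFM : cdfOf P X M = 1 := cdf_eq_one P X M hMbound
  -- facts about z₀
  have hAneg : ∀ z : ℝ, z < 0 → z ∈ {z : ℝ | 1 ≤ (1 + ϱ) * g (1 - cdfOf P X z)} := by
    intro z hz
    have hempty : {ω | X ω ≤ z} = (∅ : Set Ω) := by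
      ext ω; simp only [Set.mem_setOf_eq, Set.mem_empty_iff_false, iff_false, not_le]
      exact lt_of_lt_of_le hz (hXnn ω)
    have : cdfOf P X z = 0 := by unfold cdfOf; rw [hempty]; simp
    simp only [Set.mem_setOf_eq, this, sub_zero, hg.2.2.2, mul_one]
    linarith
  have hAbdd : ∀ z ∈ {z : ℝ | 1 ≤ (1 + ϱ) * g (1 - cdfOf P X z)}, z ≤ M := by
    intro z hz
    by_contra hc
    push_neg at hc
    have h1 : cdfOf P X z = 1 := cdf_eq_one P X z
      (by filter_upwards [hMbound] with ω hω using le_trans hω (le_of_lt hc))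
    simp only [Set.mem_setOf_eq, h1, sub_self, hg.2.2.1, mul_zero] at hz
    linarith
  have hAne : Set.Nonempty {z : ℝ | 1 ≤ (1 + ϱ) * g (1 - cdfOf P X z)} :=
    ⟨-1, hAneg (-1) (by norm_num)⟩
  have hAbdd' : BddAbove {z : ℝ | 1 ≤ (1 + ϱ) * g (1 - cdfOf P X z)} := ⟨M, hAbdd⟩
  have hz₀M : z₀ ≤ M := by rw [hz₀]; exact csSup_le hAne hAbdd
  have hz₀0 : 0 ≤ z₀ := by
    by_contra hc
    push_neg at hc
    have hmem := hAneg (z₀/2) (by linarith)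
    have := le_csSup hAbdd' hmem
    rw [← hz₀] at this
    linarith
  have hlow : ∀ t : ℝ, 0 ≤ t → t < z₀ → 1 ≤ (1 + ϱ) * g (1 - cdfOf P X t) := by
    intro t _ ht
    rw [hz₀] at ht
    obtain ⟨a, ha, hta⟩ := exists_lt_of_lt_csSup hAne ht
    have hFa := cdf_mono P X (le_of_lt hta)
    have hmono : g (1 - cdfOf P X a) ≤ g (1 - cdfOf P X t) :=
      hg.1 ⟨by linarith [cdf_le_one P X a], by linarith [cdf_nonneg P X a]⟩
        ⟨by linarith [cdf_le_one P X t], by linarith [cdf_nonneg P X t]⟩ (by linarith)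
    calc (1:ℝ) ≤ (1+ϱ) * g (1 - cdfOf P X a) := ha
    _ ≤ (1+ϱ) * g (1 - cdfOf P X t) := by nlinarith
  have hup : ∀ t : ℝ, z₀ < t → (1 + ϱ) * g (1 - cdfOf P X t) ≤ 1 := by
    intro t ht
    by_contra hc
    push_neg at hc
    have : t ≤ z₀ := by rw [hz₀]; exact le_csSup hAbdd' (le_of_lt hc)
    linarith
  -- positivity of G below M
  have hGpos : ∀ t : ℝ, 0 ≤ t → t < M → 0 < g (1 - cdfOf P X t) := by
    intro t ht htM
    have hFt : cdfOf P X t < 1 := by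
      rw [← hFM]
      exact hFXstrict ⟨ht, le_of_lt htM⟩ ⟨hM0, le_rfl⟩ htM
    have hst : g 0 < g (1 - cdfOf P X t) :=
      hgstrict ⟨le_rfl, by norm_num⟩
        ⟨by linarith, by linarith [cdf_nonneg P X t]⟩ (by linarith)
    rw [hg.2.2.1] at hst
    exact hst
  have hIntPos : ∀ a b : ℝ, 0 ≤ a → a < b → b ≤ M →
      0 < ∫ t in Set.Ioc a b, g (1 - cdfOf P X t) := by
    intro a b ha hab hbM
    have hm1 : a ≤ (a+b)/2 := by linarith
    have hm2 : (a+b)/2 ≤ b := by linarith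
    have hmM : (a+b)/2 < M := by linarith
    have hm0 : 0 ≤ (a+b)/2 := by linarith
    rw [Ioc_integral_add _ (fun a b => G_integrableOn_Ioc P g hg X a b) a ((a+b)/2) b hm1 hm2]
    have h2 : 0 ≤ ∫ t in Set.Ioc ((a+b)/2) b, g (1 - cdfOf P X t) :=
      setIntegral_nonneg measurableSet_Ioc (fun x _ => (G_mem P g hg X x).1)
    have h1 : ((a+b)/2 - a) * g (1 - cdfOf P X ((a+b)/2)) ≤
        ∫ t in Set.Ioc a ((a+b)/2), g (1 - cdfOf P X t) := by
      have hkey : ∀ z ∈ Set.Ioo a ((a+b)/2), g (1 - cdfOf P X ((a+b)/2)) ≤ g (1 - cdfOf P X z) :=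
        fun z hz => G_antitone P g hg X (le_of_lt hz.2)
      have hle := setIntegral_mono_on
        (integrableOn_const (by rw [Real.volume_Ioo]; exact ENNReal.ofReal_ne_top))
        ((G_integrableOn_Ioc P g hg X a ((a+b)/2)).mono_set Set.Ioo_subset_Ioc_self)
        measurableSet_Ioo hkey
      rw [setIntegral_const, smul_eq_mul, Real.volume_real_Ioo_of_le (by linarith : a ≤ (a+b)/2)] at hle
      rw [integral_Ioc_eq_integral_Ioo]
      exact hle
    have hGm := hGpos ((a+b)/2) hm0 hmM
    nlinarith
  -- translation of the layer integral
  have htrans : ∀ c : ℝ, 0 ≤ c →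
      (∫ z in Set.Ioc 0 c, g (1 - cdfOf P X (z + z₀)))
        = ∫ u in Set.Ioc z₀ (z₀ + c), g (1 - cdfOf P X u) := by
    intro c hc
    rw [← intervalIntegral.integral_of_le hc,
      ← intervalIntegral.integral_of_le (by linarith : z₀ ≤ z₀ + c),
      intervalIntegral.integral_comp_add_right (fun u => g (1 - cdfOf P X u)) z₀]
    norm_num [add_comm]
  -- distorted expectation of (X - z₀)₊
  have hdistMax : distExp g P (fun ω => max (X ω - z₀) 0)
      = ∫ u in Set.Ioc z₀ M, g (1 - cdfOf P X u) := by
    have hball : ∀ᵐ ω ∂P, max (X ω - z₀) 0 ≤ M - z₀ := by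
      filter_upwards [hMbound] with ω hω
      exact max_le (by linarith) (by linarith)
    rw [distExp_eq P g hg _ (M - z₀) (by linarith) hball]
    have hcongr : ∀ z ∈ Set.Ioc (0:ℝ) (M - z₀),
        g (1 - cdfOf P (fun ω => max (X ω - z₀) 0) z) = g (1 - cdfOf P X (z + z₀)) := by
      intro z hz
      have hset : {ω | max (X ω - z₀) 0 ≤ z} = {ω | X ω ≤ z + z₀} := by
        ext ω
        simp only [Set.mem_setOf_eq, max_le_iff]
        constructor
        · intro hω; linarith [hω.1]
        · intro hω; exact ⟨by linarith, le_of_lt hz.1⟩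
      unfold cdfOf
      rw [hset]
    rw [setIntegral_congr_fun measurableSet_Ioc hcongr, htrans (M - z₀) (by linarith)]
    have hMz : z₀ + (M - z₀) = M := by ring
    rw [hMz]
  -- the main pointwise estimate via (★)
  have hmain : ∀ (I : ℝ → ℝ), IsCeded I → ∀ ω, X ω ≤ M → z₀ < X ω →
      ξ ≤ w₀ - h (X ω) - X ω + I (X ω) - (1+ϱ) * distExp g P (fun ω' => I (X ω')) →
      ξ ≤ w₀ - h (X ω) - z₀ - (1+ϱ) * ∫ t in Set.Ioc z₀ (X ω), g (1 - cdfOf P X t) := by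
    intro I hI ω hωM hωz hcond
    have hx0 : 0 ≤ X ω := hXnn ω
    have hIb : ∀ᵐ ω' ∂P, I (X ω') ≤ M := by
      filter_upwards [hMbound] with ω' hω'
      exact le_trans (ceded_le_self hI (hXnn ω')) hω'
    have hIz0 : 0 ≤ I z₀ := ceded_nonneg hI hz₀0
    have hIzx : I z₀ ≤ I (X ω) := ceded_mono hI hz₀0 (le_of_lt hωz)
    have hstar := star P X hXnn g hg hI ϱ z₀ (X ω) hϱ hz₀0 (le_of_lt hωz) hup
    have hbelow := below_z0 P X hXnn g hg hI ϱ z₀ z₀ hϱ hz₀0 le_rfl hlow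
    have hsplit := Ioc_integral_add (fun z => g (1 - cdfOf P (fun ω' => I (X ω')) z))
      (fun a b => G_integrableOn_Ioc P g hg (fun ω' => I (X ω')) a b) 0 (I z₀) (I (X ω)) hIz0 hIzx
    have hlayer := distExp_ge_layer P X hXnn g hg hI M (I (X ω)) hM0 hIb
    rw [hsplit] at hlayer
    have hmul := mul_le_mul_of_nonneg_left hlayer (le_of_lt h1ϱ)
    linarith
  -- distExp of the zero contract
  have hdist0 : distExp g P (fun _ : Ω => (0:ℝ)) = 0 := by
    have hzero : ∀ z ∈ Set.Ioi (0:ℝ), g (1 - cdfOf P (fun _ : Ω => (0:ℝ)) z) = (fun _ => (0:ℝ)) z := by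
      intro z hz
      have h1 : cdfOf P (fun _ : Ω => (0:ℝ)) z = 1 :=
        cdf_eq_one P _ z (Filter.Eventually.of_forall (fun ω => le_of_lt hz))
      simp [h1, hg.2.2.1]
    unfold distExp
    rw [setIntegral_congr_fun measurableSet_Ioi hzero]
    simp
  constructor
  · -- part (i): no reinsurance is optimal
    intro hcase I hI
    have hE0 : objVal P X g h ϱ w₀ ξ (fun _ => 0)
        = (P {ω | ξ ≤ w₀ - h (X ω) - X ω}).toReal := by
      unfold objVal
      simp [hdist0]
    rw [hE0]
    unfold objVal
    refine ENNReal.toReal_mono (measure_ne_top _ _) (measure_mono_ae ?_)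
    filter_upwards [hMbound] with ω hωM hcond
    replace hcond : ξ ≤ w₀ - h (X ω) - X ω + I (X ω)
        - (1 + ϱ) * distExp g P (fun ω' => I (X ω')) := hcond
    show ξ ≤ w₀ - h (X ω) - X ω
    rcases le_or_gt (X ω) z₀ with hxz | hxz
    · -- below z₀ : retention unchanged, premium dominates indemnity
      have hIb : ∀ᵐ ω' ∂P, I (X ω') ≤ M := by
        filter_upwards [hMbound] with ω' hω'
        exact le_trans (ceded_le_self hI (hXnn ω')) hω'
      have hbelow := below_z0 P X hXnn g hg hI ϱ z₀ (X ω) hϱ (hXnn ω) hxz hlow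
      have hlayer := distExp_ge_layer P X hXnn g hg hI M (I (X ω)) hM0 hIb
      have hmul := mul_le_mul_of_nonneg_left hlayer (le_of_lt h1ϱ)
      linarith
    · -- above z₀ : contradiction with case hypothesis
      have hstep := hmain I hI ω hωM hxz hcond
      have hhx : h z₀ ≤ h (X ω) := hhmono ⟨hz₀0, hz₀M⟩ ⟨hXnn ω, hωM⟩ (le_of_lt hxz)
      have hpos := hIntPos z₀ (X ω) hz₀0 hxz hωM
      linarith [mul_pos h1ϱ hpos]
  · -- part (ii): stop-loss with upper limit is optimal
    intro hcase
    have hzM : z₀ < M := by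
      rcases eq_or_lt_of_le hz₀M with heq | hlt
      · exfalso
        have hint0 : (∫ u in Set.Ioc z₀ M, g (1 - cdfOf P X u)) = 0 := by
          rw [heq, Set.Ioc_self]; simp
        rw [hdistMax, hint0] at hass1
        rw [heq] at hcase
        linarith
      · exact hlt
    -- IVT for L(z₀, ·)
    have hLcont : ContinuousOn (fun b => Lfun P X g h ϱ z₀ b) (Set.Icc z₀ M) := by
      unfold Lfun
      refine ContinuousOn.add (ContinuousOn.add ?_ continuousOn_const) ?_
      · exact hhcont.mono (Set.Icc_subset_Icc hz₀0 le_rfl)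
      · refine ContinuousOn.mul continuousOn_const ?_
        have hint : IntegrableOn (fun t => g (1 - cdfOf P X t)) (Set.Icc z₀ M) := by
          refine Integrable.mono' (integrable_const 1)
            ((G_antitone P g hg X).measurable).aestronglyMeasurable ?_
          filter_upwards with z
          rw [Real.norm_eq_abs, abs_le]
          exact ⟨by linarith [(G_mem P g hg X z).1], (G_mem P g hg X z).2⟩
        have hprim := intervalIntegral.continuousOn_primitive (μ := volume) hint
        refine hprim.congr ?_
        intro b hb
        exact intervalIntegral.integral_of_le hb.1
    have hLz : Lfun P X g h ϱ z₀ z₀ < w₀ - ξ := by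
      unfold Lfun
      rw [intervalIntegral.integral_same]
      simpa using hcase
    have hLM : w₀ - ξ < Lfun P X g h ϱ z₀ M := by
      unfold Lfun
      rw [intervalIntegral.integral_of_le hz₀M, ← hdistMax]
      exact hass1
    obtain ⟨bs, hbs, hbseq⟩ :=
      intermediate_value_Ioo (le_of_lt hzM) hLcont (Set.mem_Ioo.mpr ⟨hLz, hLM⟩)
    have hbs0 : 0 ≤ bs := le_trans hz₀0 (le_of_lt hbs.1)
    have hbsM : bs ≤ M := le_of_lt hbs.2
    have hQ : h bs + z₀ + (1+ϱ) * (∫ t in Set.Ioc z₀ bs, g (1 - cdfOf P X t)) = w₀ - ξ := by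
      have h5 := hbseq
      simp only [Lfun] at h5
      rw [intervalIntegral.integral_of_le (le_of_lt hbs.1)] at h5
      exact h5
    -- distorted expectation of the stop-loss contract
    have hIfb : ∀ x : ℝ, Ifun z₀ bs x ≤ bs - z₀ := by
      intro x; unfold Ifun
      split_ifs with hb1 hb2
      · linarith [hbs.1]
      · linarith
      · exact le_rfl
    have hdistI : distExp g P (fun ω => Ifun z₀ bs (X ω))
        = ∫ u in Set.Ioc z₀ bs, g (1 - cdfOf P X u) := by
      rw [distExp_eq P g hg _ (bs - z₀) (by linarith [hbs.1])
        (Filter.Eventually.of_forall (fun ω => hIfb (X ω)))]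
      rw [integral_Ioc_eq_integral_Ioo]
      have hcongr : ∀ z ∈ Set.Ioo (0:ℝ) (bs - z₀),
          g (1 - cdfOf P (fun ω => Ifun z₀ bs (X ω)) z) = g (1 - cdfOf P X (z + z₀)) := by
        intro z hz
        have hset : {ω | Ifun z₀ bs (X ω) ≤ z} = {ω | X ω ≤ z + z₀} := by
          ext ω
          simp only [Set.mem_setOf_eq]
          unfold Ifun
          split_ifs with hb1 hb2
          · constructor
            · intro _; linarith [hz.1]
            · intro _; linarith [hz.1]
          · constructor <;> (intro; linarith)
          · push_neg at hb1 hb2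
            constructor <;> (intro; linarith [hz.2])
        unfold cdfOf
        rw [hset]
      rw [setIntegral_congr_fun measurableSet_Ioo hcongr, ← integral_Ioc_eq_integral_Ioo,
        htrans (bs - z₀) (by linarith [hbs.1])]
      have hbz : z₀ + (bs - z₀) = bs := by ring
      rw [hbz]
    -- value of the stop-loss contract
    have hobjI : objVal P X g h ϱ w₀ ξ (Ifun z₀ bs) = cdfOf P X bs := by
      unfold objVal
      have hsets : {ω | ξ ≤ w₀ - h (X ω) - X ω + Ifun z₀ bs (X ω)
          - (1+ϱ) * distExp g P (fun ω' => Ifun z₀ bs (X ω'))} =ᶠ[ae P] {ω | X ω ≤ bs} := by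
        rw [Filter.eventuallyEq_set]
        filter_upwards [hMbound] with ω hωM
        simp only [Set.mem_setOf_eq, hdistI]
        constructor
        · intro hcond
          by_contra hc
          push_neg at hc
          have hIv : Ifun z₀ bs (X ω) = bs - z₀ := by
            unfold Ifun; rw [if_neg (by push_neg; linarith [hbs.1]), if_neg (by push_neg; linarith)]
          rw [hIv] at hcond
          have hh : h bs ≤ h (X ω) := hhmono ⟨hbs0, hbsM⟩ ⟨hXnn ω, hωM⟩ (le_of_lt hc)
          linarith
        · intro hxbs
          rcases le_or_gt (X ω) z₀ with hxz | hxz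
          · have hIv : Ifun z₀ bs (X ω) = 0 := by unfold Ifun; rw [if_pos hxz]
            rw [hIv]
            have hh : h (X ω) ≤ h bs := hhmono ⟨hXnn ω, hωM⟩ ⟨hbs0, hbsM⟩ hxbs
            linarith
          · have hIv : Ifun z₀ bs (X ω) = X ω - z₀ := by
              unfold Ifun; rw [if_neg (not_le.mpr hxz), if_pos hxbs]
            rw [hIv]
            have hh : h (X ω) ≤ h bs := hhmono ⟨hXnn ω, hωM⟩ ⟨hbs0, hbsM⟩ hxbs
            linarith
      rw [measure_congr hsets]
      rfl
    refine ⟨bs, hbs, hbseq, ?_, hobjI⟩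
    intro I hI
    rw [hobjI]
    unfold objVal
    have hcdf : cdfOf P X bs = (P {ω | X ω ≤ bs}).toReal := rfl
    rw [hcdf]
    refine ENNReal.toReal_mono (measure_ne_top _ _) (measure_mono_ae ?_)
    filter_upwards [hMbound] with ω hωM hcond
    replace hcond : ξ ≤ w₀ - h (X ω) - X ω + I (X ω)
        - (1 + ϱ) * distExp g P (fun ω' => I (X ω')) := hcond
    show X ω ≤ bs
    by_contra hc
    push_neg at hc
    have hxz : z₀ < X ω := lt_trans hbs.1 hc
    have hstep := hmain I hI ω hωM hxz hcond
    have hsplitQ := Ioc_integral_add (fun t => g (1 - cdfOf P X t))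
      (fun a b => G_integrableOn_Ioc P g hg X a b) z₀ bs (X ω) (le_of_lt hbs.1) (le_of_lt hc)
    rw [hsplitQ] at hstep
    have hpos := hIntPos bs (X ω) hbs0 hc hωM
    have hh : h bs ≤ h (X ω) := hhmono ⟨hbs0, hbsM⟩ ⟨hXnn ω, hωM⟩ (le_of_lt hc)
    linarith [mul_pos h1ϱ hpos]
end
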